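/- arXiv:2003.06178 — 2 statements merged into one kernel-verified Lean document; each statement's English description precedes it below -/
import Mathlib

section
/- Let D be a digraph, X a set of vertices, y a vertex not in X, and let P and Q be (X,y)-path-systems in D. Then there is an (X,y)-path-system R in D such that the set of initial vertices of R contains the set of initial vertices of P, and the set of terminal edges of R contains the set of terminal edges of Q. -/
/-!  Common framework: digraphs as edge sets on a vertex type, directed paths,
path-systems, separations, flames and largeness. -/

universe u

variable {V : Type u}

/-- A directed path in the digraph on `V` with edge set `E`, given by its
(nonempty, repetition-free) list of vertices `start :: rest`. -/
structure Dipath (E : Set (V × V)) : Type u where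
  start : V
  rest : List V
  chain : List.Chain (fun a b => (a, b) ∈ E) start rest
  nodup : (start :: rest).Nodup

namespace Dipath

variable {E : Set (V × V)}

/-- The list of vertices of the path. -/
def verts (p : Dipath E) : List V := p.start :: p.rest

/-- The terminal vertex of the path. -/
def last (p : Dipath E) : V := (p.start :: p.rest).getLast (List.cons_ne_nil _ _)

/-- The set of vertices of the path. -/
def support (p : Dipath E) : Set V := {v | v ∈ p.verts}

/-- The internal vertices of the path (all vertices except the first and the last). -/
def internal (p : Dipath E) : Set V := {v | v ∈ p.rest.dropLast}

/-- The list of (directed) edges of the path. -/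
def edges (p : Dipath E) : List (V × V) := p.verts.zip p.rest

/-- The set of edges of the path. -/
def edgeSet (p : Dipath E) : Set (V × V) := {e | e ∈ p.edges}

/-- The last edge of the path, if the path has at least one edge. -/
def lastEdge? (p : Dipath E) : Option (V × V) := p.edges.getLast?

end Dipath

section Defs

variable (E : Set (V × V))

/-- The set of ingoing edges of `v`. -/
def inEdges (v : V) : Set (V × V) := {e ∈ E | e.2 = v}

/-- The set of initial vertices of a set of paths. -/
def initVerts {E : Set (V × V)} (P : Set (Dipath E)) : Set V := Dipath.start '' P

/-- The set of terminal vertices of a set of paths. -/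
def termVerts {E : Set (V × V)} (P : Set (Dipath E)) : Set V := Dipath.last '' P

/-- The set of terminal edges of a set of paths. -/
def termEdges {E : Set (V × V)} (P : Set (Dipath E)) : Set (V × V) :=
  {e | ∃ p ∈ P, p.lastEdge? = some e}

/-- An `(r,v)`-path-system: a set of pairwise internally disjoint directed
paths from `r` to `v`. -/
def IsRVSystem (r v : V) (P : Set (Dipath E)) : Prop :=
  (∀ p ∈ P, p.start = r ∧ p.last = v) ∧
    P.Pairwise fun p q => p.support ∩ q.support ⊆ {r, v}

/-- An `(r,v)`-separation: a set of vertices avoiding `r` and `v` and meeting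
every directed path from `r` to `v`. -/
def IsSeparation (r v : V) (S : Set V) : Prop :=
  r ∉ S ∧ v ∉ S ∧ ∀ p : Dipath E, p.start = r → p.last = v → (p.support ∩ S).Nonempty

/-- A set of paths `P` and a vertex set `S` are orthogonal:  every path of `P`
meets `S` in exactly one vertex and every vertex of `S` lies on a path of `P`. -/
def Orthogonal {E : Set (V × V)} (P : Set (Dipath E)) (S : Set V) : Prop :=
  (∀ p ∈ P, ∃! x, x ∈ p.support ∩ S) ∧ ∀ x ∈ S, ∃ p ∈ P, x ∈ p.support

/-- An Erdős–Menger `(r,v)`-path-system: one orthogonal to some `(r,v)`-separation. -/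
def IsEMSystem (r v : V) (P : Set (Dipath E)) : Prop :=
  IsRVSystem E r v P ∧ ∃ S, IsSeparation E r v S ∧ Orthogonal P S

/-- An Erdős–Menger `(r,v)`-separation: one orthogonal to some `(r,v)`-path-system. -/
def IsEMSeparation (r v : V) (S : Set V) : Prop :=
  IsSeparation E r v S ∧ ∃ P : Set (Dipath E), IsRVSystem E r v P ∧ Orthogonal P S

/-- `𝒢_E(v)` (with root `r`): the collection of edge sets `I` that arise as the set of
terminal edges of an internally disjoint `(r,v)`-path-system in `E`. -/
def GSet (r v : V) : Set (Set (V × V)) :=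
  {I | ∃ P : Set (Dipath E), IsRVSystem E r v P ∧ termEdges P = I}

/-- A vertex-flame (with root `r`): for every `v ≠ r`, the whole in-edge set of `v`
is the terminal edge set of an internally disjoint `(r,v)`-path-system. -/
def IsFlame (r : V) : Prop := ∀ v, v ≠ r → inEdges E v ∈ GSet E r v

/-- `L` is `v`-large with respect to the digraph `E` rooted at `r`: `L` contains `rv`
whenever `E` does, and some Erdős–Menger `(r,v)`-path-system of `E - rv` lies in `L`. -/
def VLarge (r : V) (L : Set (V × V)) (v : V) : Prop :=
  ((r, v) ∈ E → (r, v) ∈ L) ∧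
    ∃ P : Set (Dipath (E \ {(r, v)})),
      IsEMSystem (E \ {(r, v)}) r v P ∧ ∀ p ∈ P, p.edgeSet ⊆ L

/-- `L` is large with respect to the digraph `E` rooted at `r`. -/
def Large (r : V) (L : Set (V × V)) : Prop := ∀ v, v ≠ r → VLarge E r L v

/-- An `(X,Y)`-path: from `X` to `Y`, internally disjoint from `X ∪ Y`. -/
def IsXYPath (X Y : Set V) (p : Dipath E) : Prop :=
  p.start ∈ X ∧ p.last ∈ Y ∧ ∀ w ∈ p.internal, w ∉ X ∪ Y

/-- An `(X,Y)`-path-system: pairwise disjoint `(X,Y)`-paths. -/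
def IsXYSystem (X Y : Set V) (P : Set (Dipath E)) : Prop :=
  (∀ p ∈ P, IsXYPath E X Y p) ∧ P.Pairwise fun p q => Disjoint p.support q.support

/-- `X` is joinable to `Y`: some `(X,Y)`-path-system covers `X` with its initial vertices. -/
def Joinable (X Y : Set V) : Prop :=
  ∃ P : Set (Dipath E), IsXYSystem E X Y P ∧ initVerts P = X

/-- `X` is incompressible to `Y`: `X` is joinable to `Y` and every witnessing
path-system covers `Y` with its terminal vertices. -/
def Incompressible (X Y : Set V) : Prop :=
  Joinable E X Y ∧
    ∀ P : Set (Dipath E), IsXYSystem E X Y P → initVerts P = X → termVerts P = Y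

/-- An `(X,Y)`-separation: a vertex set meeting every `(X,Y)`-path. -/
def IsXYSeparation (X Y : Set V) (S : Set V) : Prop :=
  ∀ p : Dipath E, IsXYPath E X Y p → (p.support ∩ S).Nonempty

/-- An Erdős–Menger `(X,Y)`-separation: one orthogonal to some `(X,Y)`-path-system. -/
def IsEMXYSeparation (X Y : Set V) (S : Set V) : Prop :=
  IsXYSeparation E X Y S ∧ ∃ P : Set (Dipath E), IsXYSystem E X Y P ∧ Orthogonal P S

/-- `X'` is `(X,Y)`-finitely extendable: every `O` with `X' ⊆ O ⊆ X` and `O \ X'`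
finite is joinable to `Y`. -/
def FinExtendable (X Y X' : Set V) : Prop :=
  X' ⊆ X ∧ ∀ O, X' ⊆ O → O ⊆ X → (O \ X').Finite → Joinable E O Y

/-- `S` separates the vertex `y` from `r`:  every directed path from `r` to `y` meets `S`. -/
def SeparatesFrom (r : V) (S : Set V) (y : V) : Prop :=
  ∀ p : Dipath E, p.start = r → p.last = y → (p.support ∩ S).Nonempty

/-- An `(X,y)`-path: from a vertex of `X` to `y`, internally disjoint from `X`. -/
def IsXyPath (X : Set V) (y : V) (p : Dipath E) : Prop :=
  p.start ∈ X ∧ p.last = y ∧ ∀ w ∈ p.internal, w ∉ X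

/-- An `(X,y)`-path-system: `(X,y)`-paths, pairwise disjoint except possibly at `y`. -/
def IsXySystem (X : Set V) (y : V) (P : Set (Dipath E)) : Prop :=
  (∀ p ∈ P, IsXyPath E X y p) ∧ P.Pairwise fun p q => p.support ∩ q.support ⊆ {y}

/-- An `(r,S)`-path: from `r` to a vertex of `S`, internally disjoint from `S`. -/
def IsRSPath (r : V) (S : Set V) (p : Dipath E) : Prop :=
  p.start = r ∧ p.last ∈ S ∧ ∀ w ∈ p.internal, w ∉ S

/-- An `(r,S)`-path-system: `(r,S)`-paths, pairwise disjoint apart from `r`. -/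
def IsRSSystem (r : V) (S : Set V) (P : Set (Dipath E)) : Prop :=
  (∀ p ∈ P, IsRSPath E r S p) ∧ P.Pairwise fun p q => p.support ∩ q.support ⊆ {r}

/-- `E` is a `G`-quasi-flame (with root `r`): for every `v ≠ r`, every set `I` of
ingoing edges of `v` with `I \ inEdges G v` finite lies in `𝒢_E(v)`. -/
def QuasiFlame (r : V) (G : Set (V × V)) : Prop :=
  ∀ v, v ≠ r → ∀ I, I ⊆ inEdges E v → (I \ inEdges G v).Finite → I ∈ GSet E r v

/-- The local connectivity `κ_E(r,v)`: the maximum size of an internally disjoint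
`(r,v)`-path-system. -/
noncomputable def kappa (r v : V) : ℕ :=
  sSup {n | ∃ P : Set (Dipath E), IsRVSystem E r v P ∧ P.Finite ∧ P.ncard = n}

end Defs


section PymAux

open List

variable {V : Type u} {E : Set (V × V)}

namespace Dipath

theorem verts_ne_nil (p : Dipath E) : p.verts ≠ [] := List.cons_ne_nil _ _

theorem verts_length_pos (p : Dipath E) : 0 < p.verts.length :=
  List.length_pos_iff.2 p.verts_ne_nil

theorem nodup_verts (p : Dipath E) : p.verts.Nodup := p.nodup

theorem chain'_verts (p : Dipath E) : List.Chain' (fun a b => (a, b) ∈ E) p.verts := p.chain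

theorem mem_support_iff {p : Dipath E} {v : V} : v ∈ p.support ↔ v ∈ p.verts := Iff.rfl

theorem last_eq_getLast (p : Dipath E) : p.last = p.verts.getLast p.verts_ne_nil := rfl

theorem last_mem (p : Dipath E) : p.last ∈ p.support := by
  rw [mem_support_iff, last_eq_getLast]; exact List.getLast_mem _

theorem getElem_zero (p : Dipath E) : p.verts[0]'p.verts_length_pos = p.start := rfl

theorem getElem_length_sub_one (p : Dipath E) :
    p.verts[p.verts.length - 1]'(by have := p.verts_length_pos; omega) = p.last := by
  rw [last_eq_getLast, List.getLast_eq_getElem]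

theorem getElem_eq_last_iff (p : Dipath E) {j : ℕ} (hj : j < p.verts.length) :
    p.verts[j] = p.last ↔ j = p.verts.length - 1 := by
  constructor
  · intro h
    rw [← p.getElem_length_sub_one] at h
    exact (List.Nodup.getElem_inj_iff p.nodup_verts).1 h
  · rintro rfl
    exact p.getElem_length_sub_one

/-- Build a path from a suitable vertex list. -/
def ofVerts : (l : List V) → l ≠ [] → List.Chain' (fun a b => (a, b) ∈ E) l → l.Nodup →
    Dipath E
  | a :: r, _, h2, h3 => ⟨a, r, h2, h3⟩

@[simp] theorem ofVerts_verts (l : List V) (h1 : l ≠ []) (h2) (h3) :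
    (ofVerts (E := E) l h1 h2 h3).verts = l := by
  cases l with
  | nil => exact absurd rfl h1
  | cons a r => rfl

@[simp] theorem ofVerts_start (l : List V) (h1 : l ≠ []) (h2) (h3) :
    (ofVerts (E := E) l h1 h2 h3).start = l.head h1 := by
  cases l with
  | nil => exact absurd rfl h1
  | cons a r => rfl

theorem mem_internal_iff {p : Dipath E} {v : V} :
    v ∈ p.internal ↔ v ∈ p.support ∧ v ≠ p.start ∧ v ≠ p.last := by
  obtain ⟨a, r, hc, hn⟩ := p
  show v ∈ r.dropLast ↔ v ∈ a :: r ∧ v ≠ a ∧ v ≠ (a :: r).getLast (List.cons_ne_nil _ _)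
  rcases eq_or_ne r [] with rfl | hr
  · simp
  · have hdecomp := List.dropLast_append_getLast hr
    have hlast : (a :: r).getLast (List.cons_ne_nil _ _) = r.getLast hr :=
      List.getLast_cons hr
    obtain ⟨hanotr, hrnd⟩ := List.nodup_cons.1 hn
    have hdisj : r.getLast hr ∉ r.dropLast := by
      intro hmem
      have : ¬ r.Nodup := by
        rw [← hdecomp]
        intro hnd
        have := (List.nodup_append.1 hnd).2.2
        exact this _ hmem _ (List.mem_singleton_self _) rfl
      exact this hrnd
    constructor
    · intro hv
      have hvr : v ∈ r := by
        rw [← hdecomp]; exact List.mem_append_left _ hv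
      refine ⟨List.mem_cons_of_mem _ hvr, ?_, ?_⟩
      · rintro rfl; exact hanotr hvr
      · rw [hlast]; rintro rfl; exact hdisj hv
    · rintro ⟨hv, hva, hvl⟩
      rw [hlast] at hvl
      have hvr : v ∈ r := by
        rcases List.mem_cons.1 hv with rfl | h
        · exact absurd rfl hva
        · exact h
      rw [← hdecomp] at hvr
      rcases List.mem_append.1 hvr with h | h
      · exact h
      · exact absurd (List.mem_singleton.1 h) hvl

theorem getElem_mem_internal {p : Dipath E} {j : ℕ} (h0 : 0 < j)
    (hj : j < p.verts.length - 1) :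
    p.verts[j]'(by omega) ∈ p.internal := by
  rw [mem_internal_iff]
  refine ⟨List.getElem_mem _, ?_, ?_⟩
  · intro h
    rw [← p.getElem_zero] at h
    have := (List.Nodup.getElem_inj_iff p.nodup_verts).1 h
    omega
  · intro h
    rw [p.getElem_eq_last_iff (by omega)] at h
    omega

/-- The `j`-th vertex of the path (default junk value beyond the end). -/
def vrt (p : Dipath E) (j : ℕ) : V := p.verts.getD j p.start

theorem vrt_eq (p : Dipath E) {j : ℕ} (hj : j < p.verts.length) :
    p.vrt j = p.verts[j] := List.getD_eq_getElem _ _ hj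

theorem vrt_mem (p : Dipath E) {j : ℕ} (hj : j < p.verts.length) :
    p.vrt j ∈ p.support := by
  rw [vrt_eq _ hj]; exact List.getElem_mem _

end Dipath

theorem zipTail_getLast? : ∀ (l : List V) (a b : V),
    ((l ++ [a, b]).zip (l ++ [a, b]).tail).getLast? = some (a, b)
  | [], a, b => rfl
  | [c], a, b => rfl
  | c :: d :: l, a, b => by
    have ih := zipTail_getLast? (d :: l) a b
    simp only [List.cons_append, List.tail_cons, List.zip_cons_cons] at ih ⊢
    rcases hz : (d :: (l ++ [a, b])).zip (l ++ [a, b]) with _ | ⟨e, Z⟩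
    · rw [hz] at ih; simp at ih
    · rw [List.getLast?_cons_cons]
      rw [hz] at ih
      exact ih

theorem exists_append_pair : ∀ (l : List V), 2 ≤ l.length → ∃ l0 a b, l = l0 ++ [a, b]
  | [], h => by simp at h
  | [a], h => by simp at h
  | [a, b], _ => ⟨[], a, b, rfl⟩
  | a :: b :: c :: t, _ => by
    obtain ⟨l0, x, z, h⟩ := exists_append_pair (b :: c :: t) (by simp)
    exact ⟨a :: l0, x, z, by rw [List.cons_append, ← h]⟩

theorem Dipath.lastEdge?_zip (p : Dipath E) :
    p.lastEdge? = (p.verts.zip p.verts.tail).getLast? := rfl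

theorem Dipath.lastEdge?_eq_of_suffix {p q : Dipath E} {l : List V} (h2 : 2 ≤ l.length)
    (hp : l <:+ p.verts) (hq : l <:+ q.verts) : p.lastEdge? = q.lastEdge? := by
  obtain ⟨l0, a, b, rfl⟩ := exists_append_pair l h2
  obtain ⟨w1, hw1⟩ := hp
  obtain ⟨w2, hw2⟩ := hq
  rw [Dipath.lastEdge?_zip, Dipath.lastEdge?_zip, ← hw1, ← hw2, ← List.append_assoc,
    ← List.append_assoc, zipTail_getLast?, zipTail_getLast?]

theorem mem_take_iff {α : Type*} {l : List α} {n : ℕ} {v : α} :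
    v ∈ l.take n ↔ ∃ j, j < n ∧ ∃ hj : j < l.length, l[j] = v := by
  constructor
  · intro hv
    obtain ⟨i, hi, hvi⟩ := List.getElem_of_mem hv
    have hi' : i < n ∧ i < l.length := by
      simp only [List.length_take, lt_min_iff] at hi; exact hi
    refine ⟨i, hi'.1, hi'.2, ?_⟩
    rw [← hvi]
    exact (List.getElem_take).symm
  · rintro ⟨j, hjn, hj, rfl⟩
    have hj' : j < (l.take n).length := by
      simp only [List.length_take, lt_min_iff]; exact ⟨hjn, hj⟩
    have : (l.take n)[j]'hj' = l[j] := List.getElem_take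
    rw [← this]
    exact List.getElem_mem _

theorem mem_drop_iff {α : Type*} {l : List α} {n : ℕ} {v : α} :
    v ∈ l.drop n ↔ ∃ j, n ≤ j ∧ ∃ hj : j < l.length, l[j] = v := by
  constructor
  · intro hv
    obtain ⟨i, hi, hvi⟩ := List.getElem_of_mem hv
    have hi' : n + i < l.length := by
      simp only [List.length_drop] at hi; omega
    refine ⟨n + i, Nat.le_add_right _ _, hi', ?_⟩
    rw [← hvi, List.getElem_drop]
  · rintro ⟨j, hjn, hj, rfl⟩
    have hj' : j - n < (l.drop n).length := by
      simp only [List.length_drop]; omega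
    have : (l.drop n)[j - n]'hj' = l[n + (j - n)]'(by omega) := List.getElem_drop
    have h2 : l[n + (j - n)]'(by omega) = l[j] := by congr 1; omega
    rw [← h2, ← this]
    exact List.getElem_mem _

/-- `u` is a "touch" of `q`: a non-`y` vertex of `q` lying on the initial segment
(up to index `sj p`) of some path `p` of `P`. -/
def TouchN {E : Set (V × V)} (y : V) (P : Set (Dipath E)) (sj : ↥P → ℕ) (q : Dipath E)
    (u : V) : Prop :=
  u ∈ q.support ∧ u ≠ y ∧ ∃ p : ↥P, ∃ j : ℕ, j ≤ sj p ∧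
    j < (p : Dipath E).verts.length ∧ (p : Dipath E).vrt j = u

theorem exists_switch [DecidableEq V] {E : Set (V × V)} (y : V) (P Q : Set (Dipath E))
    (hQlast : ∀ q ∈ Q, q.last = y) (hQne : Q.Nonempty) (hPlast : ∀ p ∈ P, p.last = y) :
    ∃ sj : ↥P → ℕ,
      (∀ p : ↥P, sj p < (p : Dipath E).verts.length) ∧
      (∀ p : ↥P, ∃ q ∈ Q, (p : Dipath E).vrt (sj p) ∈ q.support) ∧
      (∀ p : ↥P, ∀ q ∈ Q, (p : Dipath E).vrt (sj p) ∈ q.support →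
        ∀ u, TouchN y P sj q u →
          q.verts.idxOf u ≤ q.verts.idxOf ((p : Dipath E).vrt (sj p))) ∧
      (∀ p : ↥P, ∀ j, j < sj p → (∃ q ∈ Q, (p : Dipath E).vrt j ∈ q.support) →
        ∃ q ∈ Q, (p : Dipath E).vrt j ∈ q.support ∧
          ∃ u, TouchN y P sj q u ∧
            q.verts.idxOf ((p : Dipath E).vrt j) < q.verts.idxOf u) := by
  classical
  set TE : (↥P → ℕ∞) → Dipath E → V → Prop := fun s q u =>
    u ∈ q.support ∧ u ≠ y ∧ ∃ p : ↥P, ∃ j : ℕ, (j : ℕ∞) ≤ s p ∧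
      j < (p : Dipath E).verts.length ∧ (p : Dipath E).vrt j = u with hTEdef
  set OK : (↥P → ℕ∞) → ↥P → ℕ → Prop := fun s p j =>
    j < (p : Dipath E).verts.length ∧ (∃ q ∈ Q, (p : Dipath E).vrt j ∈ q.support) ∧
      ∀ q ∈ Q, (p : Dipath E).vrt j ∈ q.support → ∀ u, TE s q u →
        q.verts.idxOf u ≤ q.verts.idxOf ((p : Dipath E).vrt j) with hOKdef
  have hidx_y : ∀ q ∈ Q, q.verts.idxOf y = q.verts.length - 1 := by
    intro q hq
    have h1 : q.verts[q.verts.length - 1]'(by have := q.verts_length_pos; omega) = y := by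
      rw [q.getElem_length_sub_one]; exact hQlast q hq
    conv_lhs => rw [← h1]
    exact List.Nodup.idxOf_getElem q.nodup_verts _ _
  have hok_last : ∀ s (p : ↥P), OK s p ((p : Dipath E).verts.length - 1) := by
    intro s p
    have hlen := (p : Dipath E).verts_length_pos
    have hlast : (p : Dipath E).vrt ((p : Dipath E).verts.length - 1) = y := by
      rw [Dipath.vrt_eq _ (by omega), Dipath.getElem_length_sub_one]
      exact hPlast _ p.2
    refine ⟨by omega, ?_, ?_⟩
    · obtain ⟨q0, hq0⟩ := hQne
      refine ⟨q0, hq0, ?_⟩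
      rw [hlast, ← hQlast q0 hq0]
      exact q0.last_mem
    · intro q hq hmem u hu
      rw [hlast, hidx_y q hq]
      have hu' : q.verts.idxOf u < q.verts.length := List.idxOf_lt_length_iff.2 hu.1
      omega
  have hne : ∀ s (p : ↥P), {j | OK s p j}.Nonempty := fun s p => ⟨_, hok_last s p⟩
  have hmono : Monotone (fun (s : ↥P → ℕ∞) (p : ↥P) => ((sInf {j | OK s p j} : ℕ) : ℕ∞)) := by
    intro s s' hss
    intro p
    have hsub : {j | OK s' p j} ⊆ {j | OK s p j} := by
      intro j hj
      obtain ⟨h1, h2, h3⟩ := hj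
      refine ⟨h1, h2, fun q hq hmem u hu => h3 q hq hmem u ?_⟩
      obtain ⟨hu1, hu2, p', j', hj', rest⟩ := hu
      exact ⟨hu1, hu2, p', j', le_trans hj' (hss p'), rest⟩
    show ((sInf {j | OK s p j} : ℕ) : ℕ∞) ≤ ((sInf {j | OK s' p j} : ℕ) : ℕ∞)
    exact_mod_cast csInf_le_csInf (OrderBot.bddBelow _) (hne s' p) hsub
  set F : (↥P → ℕ∞) →o (↥P → ℕ∞) := ⟨_, hmono⟩ with hF
  set sE := F.lfp with hsEdef
  have hfix : F sE = sE := OrderHom.map_lfp F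
  set sj : ↥P → ℕ := fun p => sInf {j | OK sE p j} with hsj
  have hsE : ∀ p, sE p = (sj p : ℕ∞) := by
    intro p
    conv_lhs => rw [← hfix]
    rfl
  have hTEiff : ∀ q u, TE sE q u ↔ TouchN y P sj q u := by
    intro q u
    simp only [hTEdef]
    unfold TouchN
    constructor
    · rintro ⟨h1, h2, p', j', hj', h4, h5⟩
      rw [hsE p', Nat.cast_le] at hj'
      exact ⟨h1, h2, p', j', hj', h4, h5⟩
    · rintro ⟨h1, h2, p', j', hj', h4, h5⟩
      refine ⟨h1, h2, p', j', ?_, h4, h5⟩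
      rw [hsE p', Nat.cast_le]
      exact hj'
  have hokj : ∀ p, OK sE p (sj p) := fun p => Nat.sInf_mem (hne sE p)
  refine ⟨sj, fun p => (hokj p).1, fun p => (hokj p).2.1, ?_, ?_⟩
  · intro p q hq hmem u hu
    exact (hokj p).2.2 q hq hmem u ((hTEiff q u).2 hu)
  · intro p j hjlt hT
    have hnot : ¬ OK sE p j := Nat.notMem_of_lt_sInf hjlt
    have hjlen : j < (p : Dipath E).verts.length := lt_trans hjlt (hokj p).1
    by_contra hcon
    push_neg at hcon
    apply hnot
    simp only [hOKdef]
    refine ⟨hjlen, hT, ?_⟩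
    intro q hq hmem u hu
    exact hcon q hq hmem u ((hTEiff q u).1 hu)

end PymAux

/-- **Corollary of Pym's theorem.** Given two `(X,y)`-path-systems `P` and `Q`, there is
an `(X,y)`-path-system `R` whose initial vertices include those of `P` and whose
terminal edges include those of `Q`. -/
theorem stmt2 {V : Type u} (E : Set (V × V)) (X : Set V) (y : V) (hy : y ∉ X)
    (P Q : Set (Dipath E)) (hP : IsXySystem E X y P) (hQ : IsXySystem E X y Q) :
    ∃ R : Set (Dipath E), IsXySystem E X y R ∧
      initVerts P ⊆ initVerts R ∧ termEdges Q ⊆ termEdges R := by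
  classical
  rcases Q.eq_empty_or_nonempty with rfl | hQne
  · refine ⟨P, hP, subset_rfl, fun e he => ?_⟩
    obtain ⟨q, hq, -⟩ := he
    exact absurd hq (Set.notMem_empty _)
  have hQlast : ∀ q ∈ Q, q.last = y := fun q hq => (hQ.1 q hq).2.1
  have hPlast : ∀ p ∈ P, p.last = y := fun p hp => (hP.1 p hp).2.1
  obtain ⟨sj, hlen, hT, hmax, hmin⟩ := exists_switch y P Q hQlast hQne hPlast
  choose qp hqpQ hqpmem using hT
  set vtx : ↥P → V := fun p => (p : Dipath E).vrt (sj p) with hvtx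
  set kp : ↥P → ℕ := fun p => (qp p).verts.idxOf (vtx p) with hkp
  have hkplt : ∀ p, kp p < (qp p).verts.length :=
    fun p => List.idxOf_lt_length_iff.2 (hqpmem p)
  have hkpget : ∀ p, (qp p).verts[kp p]'(hkplt p) = vtx p :=
    fun p => List.getElem_idxOf (hkplt p)
  have hvtxmem : ∀ p : ↥P, vtx p ∈ (p : Dipath E).support :=
    fun p => (p : Dipath E).vrt_mem (hlen p)
  have huniq : ∀ q1 ∈ Q, ∀ q2 ∈ Q, ∀ v, v ∈ q1.support → v ∈ q2.support → v ≠ y →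
      q1 = q2 := by
    intro q1 h1 q2 h2 v hv1 hv2 hvy
    by_contra hne
    exact hvy (hQ.2 h1 h2 hne ⟨hv1, hv2⟩)
  -- dichotomy facts
  have hsj_top : ∀ p : ↥P, vtx p = y → sj p = (p : Dipath E).verts.length - 1 := by
    intro p h
    apply ((p : Dipath E).getElem_eq_last_iff (hlen p)).1
    rw [← Dipath.vrt_eq _ (hlen p)]
    rw [hPlast _ p.2]
    exact h
  have hdrop_nil : ∀ p : ↥P, vtx p = y → (qp p).verts.drop (kp p + 1) = [] := by
    intro p h
    have hk : kp p = (qp p).verts.length - 1 := by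
      apply ((qp p).getElem_eq_last_iff (hkplt p)).1
      rw [hkpget p, h, hQlast _ (hqpQ p)]
    apply List.drop_eq_nil_of_le
    have := hkplt p
    omega
  have hdrop_ne : ∀ p : ↥P, vtx p ≠ y → kp p + 1 < (qp p).verts.length := by
    intro p h
    have h1 : kp p ≠ (qp p).verts.length - 1 := by
      intro he
      apply h
      rw [← hkpget p, ← hQlast _ (hqpQ p)]
      exact ((qp p).getElem_eq_last_iff (hkplt p)).2 he
    have := hkplt p
    omega
  -- segment membership
  have hvrt_last : ∀ r : Dipath E, r.last = y → r.vrt (r.verts.length - 1) = y := by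
    intro r h
    rw [Dipath.vrt_eq _ (by have := r.verts_length_pos; omega), Dipath.getElem_length_sub_one]
    exact h
  have getLast_eq_of_eq : ∀ {l l' : List V} (h : l = l') (h1 : l ≠ []),
      l.getLast h1 = l'.getLast (h ▸ h1) := by
    intro l l' h h1
    subst h
    rfl
  have hseg : ∀ (p : ↥P) (v : V), v ∈ (p : Dipath E).verts.take (sj p + 1) ↔
      ∃ j, j ≤ sj p ∧ ∃ hj : j < (p : Dipath E).verts.length, (p : Dipath E).verts[j] = v := by
    intro p v
    rw [mem_take_iff]
    constructor
    · rintro ⟨j, hj1, hj2, hj3⟩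
      exact ⟨j, by omega, hj2, hj3⟩
    · rintro ⟨j, hj1, hj2, hj3⟩
      exact ⟨j, by omega, hj2, hj3⟩
  have hTouch : ∀ (p : ↥P) (q : Dipath E), q ∈ Q → ∀ v,
      v ∈ (p : Dipath E).verts.take (sj p + 1) → v ∈ q.support → v ≠ y →
      TouchN y P sj q v := by
    intro p q hq v hvseg hvq hvy
    obtain ⟨j, hj1, hj2, hj3⟩ := (hseg p v).1 hvseg
    exact ⟨hvq, hvy, p, j, hj1, hj2, by rw [Dipath.vrt_eq _ hj2]; exact hj3⟩
  have hKey : ∀ p1 p2 : ↥P, ∀ v, v ∈ (p1 : Dipath E).verts.take (sj p1 + 1) →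
      v ∈ (qp p2).verts.drop (kp p2 + 1) → v = y := by
    intro p1 p2 v hv1 hv2
    by_contra hvy
    obtain ⟨m, hm1, hm2, hm3⟩ := mem_drop_iff.1 hv2
    have hvq : v ∈ (qp p2).support := by
      rw [Dipath.mem_support_iff, ← hm3]
      exact List.getElem_mem _
    have ht : TouchN y P sj (qp p2) v := hTouch p1 _ (hqpQ p2) v hv1 hvq hvy
    have hle := hmax p2 (qp p2) (hqpQ p2) (hqpmem p2) v ht
    have hidx : (qp p2).verts.idxOf v = m := by
      rw [← hm3]
      exact List.Nodup.idxOf_getElem (qp p2).nodup_verts _ _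
    rw [hidx] at hle
    have hle' : m ≤ kp p2 := hle
    omega
  -- the glued vertex lists
  set rl : ↥P → List V := fun p =>
    (p : Dipath E).verts.take (sj p + 1) ++ (qp p).verts.drop (kp p + 1) with hrl
  have htake_ne : ∀ p : ↥P, (p : Dipath E).verts.take (sj p + 1) ≠ [] := by
    intro p
    have : ((p : Dipath E).verts.take (sj p + 1)).length = sj p + 1 := by
      rw [List.length_take]
      have := hlen p
      omega
    intro h
    rw [h] at this
    simp at this
  have hrl_ne : ∀ p, rl p ≠ [] := by
    intro p h
    exact htake_ne p (List.append_eq_nil_iff.1 h).1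
  have hy_take : ∀ p : ↥P, y ∈ (p : Dipath E).verts.take (sj p + 1) → vtx p = y := by
    intro p h
    obtain ⟨j, hj1, hj2, hj3⟩ := (hseg p y).1 h
    have hjl : j = (p : Dipath E).verts.length - 1 := by
      apply ((p : Dipath E).getElem_eq_last_iff hj2).1
      rw [hj3, hPlast _ p.2]
    have hsjv : sj p = j := by
      have := hlen p
      omega
    show (p : Dipath E).vrt (sj p) = y
    rw [hsjv, Dipath.vrt_eq _ hj2]
    exact hj3
  have hrl_nodup : ∀ p, (rl p).Nodup := by
    intro p
    refine List.Nodup.append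
      (List.Nodup.sublist (List.take_sublist _ _) (p : Dipath E).nodup_verts)
      (List.Nodup.sublist (List.drop_sublist _ _) (qp p).nodup_verts) ?_
    intro v hv1 hv2
    have hvy := hKey p p v hv1 hv2
    subst hvy
    have := hy_take p hv1
    rw [hdrop_nil p this] at hv2
    exact List.not_mem_nil hv2
  have hrl_chain : ∀ p, List.Chain' (fun a b => (a, b) ∈ E) (rl p) := by
    intro p
    apply List.IsChain.append
    · exact (p : Dipath E).chain'_verts.prefix (List.take_prefix _ _)
    · exact (qp p).chain'_verts.drop _
    · intro x hx z hz
      rcases Nat.lt_or_ge (kp p + 1) ((qp p).verts.length) with hlt | hge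
      · rw [List.drop_eq_getElem_cons hlt] at hz
        simp only [List.head?_cons, Option.mem_some_iff] at hz
        have htake : (p : Dipath E).verts.take (sj p + 1) =
            (p : Dipath E).verts.take (sj p) ++ [(p : Dipath E).verts[sj p]'(hlen p)] := by
          rw [← List.take_concat_get (hlen p), List.concat_eq_append]
        rw [htake, List.getLast?_concat, Option.mem_some_iff] at hx
        subst hx
        subst hz
        have hc := List.isChain_iff_getElem.1 (qp p).chain'_verts (kp p) (by omega)
        rw [hkpget p] at hc
        have : (p : Dipath E).verts[sj p]'(hlen p) = vtx p :=
          (Dipath.vrt_eq _ (hlen p)).symm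
        rw [this]
        exact hc
      · rw [List.drop_eq_nil_of_le (by omega)] at hz
        simp at hz
  set rp : ↥P → Dipath E :=
    fun p => Dipath.ofVerts (rl p) (hrl_ne p) (hrl_chain p) (hrl_nodup p) with hrp
  have hrp_verts : ∀ p, (rp p).verts = rl p := fun p => Dipath.ofVerts_verts _ _ _ _
  have hrp_supp : ∀ (p : ↥P) (v : V), v ∈ (rp p).support ↔
      v ∈ (p : Dipath E).verts.take (sj p + 1) ∨ v ∈ (qp p).verts.drop (kp p + 1) := by
    intro p v
    rw [Dipath.mem_support_iff, hrp_verts]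
    exact List.mem_append
  have hrp_start : ∀ p, (rp p).start = (p : Dipath E).start := by
    intro p
    show (Dipath.ofVerts (rl p) (hrl_ne p) (hrl_chain p) (hrl_nodup p)).start = _
    rw [Dipath.ofVerts_start, List.head_eq_getElem]
    have h0 : 0 < ((p : Dipath E).verts.take (sj p + 1)).length :=
      List.length_pos_iff.2 (htake_ne p)
    have e1 : (rl p)[0]'(List.length_pos_iff.2 (hrl_ne p)) =
        ((p : Dipath E).verts.take (sj p + 1))[0]'h0 := List.getElem_append_left h0
    rw [e1, List.getElem_take]
    exact (p : Dipath E).getElem_zero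
  have hofVerts_last : ∀ (l : List V) (h1 : l ≠ []) (h2) (h3),
      (Dipath.ofVerts (E := E) l h1 h2 h3).last = l.getLast h1 := by
    intro l h1 h2 h3
    cases l with
    | nil => exact absurd rfl h1
    | cons a r => rfl
  have hrp_last : ∀ p, (rp p).last = y := by
    intro p
    have hstep : (rp p).last = (rl p).getLast (hrl_ne p) :=
      hofVerts_last (rl p) (hrl_ne p) (hrl_chain p) (hrl_nodup p)
    rcases eq_or_ne (vtx p) y with h | h
    · have h1 := hsj_top p h
      have h2 : (p : Dipath E).verts.take (sj p + 1) = (p : Dipath E).verts := by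
        apply List.take_of_length_le
        have := (p : Dipath E).verts_length_pos
        omega
      have hrl_eq : rl p = (p : Dipath E).verts := by
        show (p : Dipath E).verts.take (sj p + 1) ++ (qp p).verts.drop (kp p + 1) = _
        rw [hdrop_nil p h, List.append_nil, h2]
      rw [hstep, getLast_eq_of_eq hrl_eq]
      exact ((p : Dipath E).last_eq_getLast).symm.trans (hPlast _ p.2)
    · have hlt := hdrop_ne p h
      have hdne : (qp p).verts.drop (kp p + 1) ≠ [] := by
        intro hnil
        have hl0 : ((qp p).verts.drop (kp p + 1)).length = 0 := by rw [hnil]; rfl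
        rw [List.length_drop] at hl0
        omega
      have hrl_eq : rl p =
          (p : Dipath E).verts.take (sj p + 1) ++ (qp p).verts.drop (kp p + 1) := rfl
      rw [hstep, getLast_eq_of_eq hrl_eq, List.getLast_append_of_ne_nil _ hdne]
      have hqv : (qp p).verts.getLast (qp p).verts_ne_nil = y :=
        ((qp p).last_eq_getLast).symm.trans (hQlast _ (hqpQ p))
      rw [getLast_eq_of_eq (List.take_append_drop (kp p + 1) (qp p).verts).symm,
        List.getLast_append_of_ne_nil _ hdne] at hqv
      exact hqv
  have hXyP : ∀ p : ↥P, IsXyPath E X y (rp p) := by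
    intro p
    refine ⟨?_, hrp_last p, ?_⟩
    · rw [hrp_start]
      exact (hP.1 _ p.2).1
    · intro w hw
      rw [Dipath.mem_internal_iff] at hw
      obtain ⟨hwmem, hwstart, hwlast⟩ := hw
      rw [hrp_last p] at hwlast
      rw [hrp_start p] at hwstart
      rcases (hrp_supp p w).1 hwmem with h | h
      · obtain ⟨j, hj1, hj2, hj3⟩ := (hseg p w).1 h
        have hj0 : j ≠ 0 := by
          intro h0
          subst h0
          apply hwstart
          rw [← hj3]
          exact (p : Dipath E).getElem_zero
        have hjlast : j ≠ (p : Dipath E).verts.length - 1 := by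
          intro he
          apply hwlast
          rw [← hj3, ← Dipath.vrt_eq _ hj2, he]
          exact hvrt_last _ (hPlast _ p.2)
        have hint : w ∈ (p : Dipath E).internal := by
          rw [← hj3]
          exact Dipath.getElem_mem_internal (by omega) (by omega)
        exact (hP.1 _ p.2).2.2 w hint
      · obtain ⟨m, hm1, hm2, hm3⟩ := mem_drop_iff.1 h
        have hmlast : m ≠ (qp p).verts.length - 1 := by
          intro he
          apply hwlast
          rw [← hm3, ← Dipath.vrt_eq _ hm2, he]
          exact hvrt_last _ (hQlast _ (hqpQ p))
        have hint : w ∈ (qp p).internal := by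
          rw [← hm3]
          exact Dipath.getElem_mem_internal (by omega) (by omega)
        exact (hQ.1 _ (hqpQ p)).2.2 w hint
  have hdropQ : ∀ (p : ↥P) (v : V), v ∈ (qp p).verts.drop (kp p + 1) →
      v ∈ (qp p).support := by
    intro p v h
    obtain ⟨m, hm1, hm2, hm3⟩ := mem_drop_iff.1 h
    rw [Dipath.mem_support_iff, ← hm3]
    exact List.getElem_mem _
  have hdropTouch : ∀ p : ↥P, (qp p).verts.drop (kp p + 1) ≠ [] →
      TouchN y P sj (qp p) (vtx p) ∧ vtx p ≠ y := by
    intro p hne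
    have hy' : vtx p ≠ y := by
      intro h
      rw [hdrop_nil p h] at hne
      exact hne rfl
    exact ⟨⟨hqpmem p, hy', p, sj p, le_refl _, hlen p, rfl⟩, hy'⟩
  set RU : Set (Dipath E) := {q | q ∈ Q ∧ ∀ u, ¬ TouchN y P sj q u} with hRU
  set R : Set (Dipath E) := Set.range rp ∪ RU with hR
  have hall : ∀ r ∈ R, IsXyPath E X y r := by
    intro r hr
    rcases hr with ⟨p, rfl⟩ | ⟨hrQ, -⟩
    · exact hXyP p
    · exact hQ.1 _ hrQ
  have hpair : R.Pairwise fun a b => a.support ∩ b.support ⊆ {y} := by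
    have key : ∀ (p1 : ↥P) (b : Dipath E), b ∈ RU → ∀ v, v ∈ (rp p1).support →
        v ∈ b.support → v = y := by
      intro p1 b hb v hva hvb
      obtain ⟨hbQ, hbU⟩ := hb
      by_contra hvy
      rcases (hrp_supp p1 v).1 hva with h1 | h1
      · exact hbU v (hTouch p1 b hbQ v h1 hvb hvy)
      · have hd1 : (qp p1).verts.drop (kp p1 + 1) ≠ [] := List.ne_nil_of_mem h1
        obtain ⟨ht1, hy1⟩ := hdropTouch p1 hd1
        have hvq1 := hdropQ p1 v h1
        have heq : qp p1 = b := huniq _ (hqpQ p1) _ hbQ v hvq1 hvb hvy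
        rw [heq] at ht1
        exact hbU (vtx p1) ht1
    intro a ha b hb hab v hv
    obtain ⟨hva, hvb⟩ := hv
    show v ∈ ({y} : Set V)
    rw [Set.mem_singleton_iff]
    by_contra hvy
    rcases ha with ⟨p1, rfl⟩ | ha <;> rcases hb with ⟨p2, rfl⟩ | hb
    · rcases eq_or_ne p1 p2 with rfl | hne12
      · exact hab rfl
      have hne12' : (p1 : Dipath E) ≠ (p2 : Dipath E) := fun h => hne12 (Subtype.ext h)
      rcases (hrp_supp p1 v).1 hva with h1 | h1 <;> rcases (hrp_supp p2 v).1 hvb with h2 | h2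
      · exact hvy (hP.2 p1.2 p2.2 hne12'
          ⟨List.mem_of_mem_take h1, List.mem_of_mem_take h2⟩)
      · exact hvy (hKey p1 p2 v h1 h2)
      · exact hvy (hKey p2 p1 v h2 h1)
      · have hd1 : (qp p1).verts.drop (kp p1 + 1) ≠ [] := List.ne_nil_of_mem h1
        have hd2 : (qp p2).verts.drop (kp p2 + 1) ≠ [] := List.ne_nil_of_mem h2
        obtain ⟨ht1, hy1⟩ := hdropTouch p1 hd1
        obtain ⟨ht2, hy2⟩ := hdropTouch p2 hd2
        have hvq1 := hdropQ p1 v h1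
        have hvq2 := hdropQ p2 v h2
        have hqq : qp p1 = qp p2 := huniq _ (hqpQ p1) _ (hqpQ p2) v hvq1 hvq2 hvy
        have hle1 : (qp p2).verts.idxOf (vtx p1) ≤ kp p2 :=
          hmax p2 _ (hqpQ p2) (hqpmem p2) (vtx p1) (hqq ▸ ht1)
        have hle2 : (qp p1).verts.idxOf (vtx p2) ≤ kp p1 :=
          hmax p1 _ (hqpQ p1) (hqpmem p1) (vtx p2) (hqq ▸ ht2)
        have hk12 : kp p1 = kp p2 := by
          have e1 : kp p1 = (qp p2).verts.idxOf (vtx p1) := by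
            rw [show kp p1 = (qp p1).verts.idxOf (vtx p1) from rfl, hqq]
          have e2 : kp p2 = (qp p1).verts.idxOf (vtx p2) := by
            rw [show kp p2 = (qp p2).verts.idxOf (vtx p2) from rfl, hqq]
          omega
        have hv12 : vtx p1 = vtx p2 := by
          have g1 := hkpget p1
          have g2 := hkpget p2
          rw [← g1, ← g2]
          rw [List.getElem_of_eq (congrArg Dipath.verts hqq) (hkplt p1)]
          congr 1
        exact hy1 (hP.2 p1.2 p2.2 hne12' ⟨hvtxmem p1, hv12 ▸ hvtxmem p2⟩)
    · exact hvy (key p1 b hb v hva hvb)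
    · exact hvy (key p2 a ha v hvb hva)
    · exact hvy (hQ.2 ha.1 hb.1 hab ⟨hva, hvb⟩)
  refine ⟨R, ⟨hall, hpair⟩, ?_, ?_⟩
  · rintro x ⟨p, hp, rfl⟩
    exact ⟨rp ⟨p, hp⟩, Or.inl ⟨⟨p, hp⟩, rfl⟩, hrp_start ⟨p, hp⟩⟩
  · rintro e ⟨q, hq, hqe⟩
    by_cases hU : ∀ u, ¬ TouchN y P sj q u
    · exact ⟨q, Or.inr ⟨hq, hU⟩, hqe⟩
    push_neg at hU
    obtain ⟨u0, hu0⟩ := hU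
    set S : Set ℕ := {i | ∃ u, TouchN y P sj q u ∧ q.verts.idxOf u = i} with hS
    have hSne : S.Nonempty := ⟨_, u0, hu0, rfl⟩
    have hSbdd : BddAbove S := by
      refine ⟨q.verts.length, ?_⟩
      rintro i ⟨u, hu, rfl⟩
      exact le_of_lt (List.idxOf_lt_length_iff.2 hu.1)
    obtain ⟨u, huT, huidx⟩ := Nat.sSup_mem hSne hSbdd
    have hub : ∀ u', TouchN y P sj q u' → q.verts.idxOf u' ≤ sSup S :=
      fun u' hu' => le_csSup hSbdd ⟨u', hu', rfl⟩
    obtain ⟨huq, huy, p, j, hj1, hj2, hj3⟩ := huT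
    have hjeq : j = sj p := by
      by_contra hne'
      have hjlt : j < sj p := lt_of_le_of_ne hj1 hne'
      obtain ⟨q', hq', hmem', u', hu', hgt⟩ := hmin p j hjlt ⟨q, hq, hj3 ▸ huq⟩
      have hq'q : q' = q := huniq _ hq' _ hq _ hmem' (hj3 ▸ huq) (hj3 ▸ huy)
      subst hq'q
      have h1 := hub u' hu'
      rw [hj3] at hgt
      omega
    rw [hjeq] at hj3
    have hvtxu : vtx p = u := hj3
    have hqpq : qp p = q := by
      apply huniq _ (hqpQ p) _ hq (vtx p) (hqpmem p)
      · rw [hvtxu]; exact huq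
      · rw [hvtxu]; exact huy
    have hkpval : kp p + 1 < (qp p).verts.length := by
      apply hdrop_ne
      rw [hvtxu]
      exact huy
    refine ⟨rp p, Or.inl ⟨p, rfl⟩, ?_⟩
    rw [← hqe]
    apply Dipath.lastEdge?_eq_of_suffix (l := (qp p).verts.drop (kp p))
    · rw [List.length_drop]
      omega
    · rw [hrp_verts]
      have h1 : (p : Dipath E).verts.take (sj p + 1) =
          (p : Dipath E).verts.take (sj p) ++ [vtx p] := by
        rw [← List.take_concat_get (hlen p), List.concat_eq_append]
        congr 2
        rw [← Dipath.vrt_eq _ (hlen p)]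
      have h2 : (qp p).verts.drop (kp p) = vtx p :: (qp p).verts.drop (kp p + 1) := by
        rw [List.drop_eq_getElem_cons (hkplt p), hkpget p]
      refine ⟨(p : Dipath E).verts.take (sj p), ?_⟩
      show (p : Dipath E).verts.take (sj p) ++ (qp p).verts.drop (kp p) =
        (p : Dipath E).verts.take (sj p + 1) ++ (qp p).verts.drop (kp p + 1)
      rw [h1, h2]
      simp
    · rw [hqpq]
      exact List.drop_suffix _ _
end

section
/- Let D be a rooted digraph with root r, and let v ≠ r be a vertex with rv not an edge of D. Suppose I is a subset of the ingoing edges of v such that there is an internally disjoint (r,v)-path-system whose set of terminal edges equals I, and suppose S is an Erdős–Menger (r,v)-separation in D. Then there exists an (r,v)-path-system R orthogonal to S (hence an Erdős–Menger path-system) whose set of terminal edges contains I. -/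
/-!  Common framework: digraphs as edge sets on a vertex type, directed paths,
path-systems, separations, flames and largeness. -/

universe u

variable {V : Type u}

namespace Stmt3Aux

open Classical List

variable {V : Type u}

/-- Keep elements of `l` until (and including) the first element in `F`. -/
noncomputable def upTo (F : Set V) : List V → List V
  | [] => []
  | a :: t => if a ∈ F then [a] else a :: upTo F t

theorem upTo_spec (F : Set V) (l : List V) :
    (upTo F l = l ∧ ∀ y ∈ l, y ∉ F) ∨
      ∃ l₁ c l₂, l = l₁ ++ c :: l₂ ∧ c ∈ F ∧ (∀ y ∈ l₁, y ∉ F) ∧ upTo F l = l₁ ++ [c] := by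
  induction l with
  | nil => exact Or.inl ⟨rfl, by simp⟩
  | cons a t ih =>
    by_cases ha : a ∈ F
    · exact Or.inr ⟨[], a, t, by simp, ha, by simp, by simp [upTo, ha]⟩
    · rcases ih with ⟨h1, h2⟩ | ⟨l₁, c, l₂, rfl, hc, hcl, heq⟩
      · exact Or.inl ⟨by simp [upTo, ha, h1], by
          intro y hy
          rcases List.mem_cons.mp hy with rfl | hy
          · exact ha
          · exact h2 y hy⟩
      · refine Or.inr ⟨a :: l₁, c, l₂, by simp, hc, ?_, by simp [upTo, ha, heq]⟩
        intro y hy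
        rcases List.mem_cons.mp hy with rfl | hy
        · exact ha
        · exact hcl y hy

theorem upTo_prefix (F : Set V) (l : List V) : upTo F l <+: l := by
  rcases upTo_spec F l with ⟨h, -⟩ | ⟨l₁, c, l₂, h, -, -, heq⟩
  · rw [h]
  · rw [heq, h]
    exact ⟨l₂, by simp⟩

theorem mem_of_mem_upTo {F : Set V} {l : List V} {y : V} (h : y ∈ upTo F l) : y ∈ l :=
  (upTo_prefix F l).subset h

theorem upTo_mono {F F' : Set V} (h : F' ⊆ F) (l : List V) : upTo F l <+: upTo F' l := by
  induction l with
  | nil => simp [upTo]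
  | cons a t ih =>
    by_cases ha' : a ∈ F'
    · simp [upTo, ha', h ha']
    · by_cases ha : a ∈ F
      · simp only [upTo, if_pos ha, if_neg ha']
        exact ⟨upTo F' t, rfl⟩
      · simp only [upTo, if_neg ha, if_neg ha']
        obtain ⟨w, hw⟩ := ih
        exact ⟨w, by simp [hw]⟩

theorem head_mem_upTo (F : Set V) (a : V) (t : List V) : a ∈ upTo F (a :: t) := by
  by_cases ha : a ∈ F <;> simp [upTo, ha]

/-- The list from (the first occurrence of) `x` on. -/
noncomputable def suffixFrom (x : V) : List V → List V
  | [] => []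
  | a :: t => if a = x then a :: t else suffixFrom x t

/-- The list strictly before (the first occurrence of) `x`. -/
noncomputable def prefixTo (x : V) : List V → List V
  | [] => []
  | a :: t => if a = x then [] else a :: prefixTo x t

theorem suffixFrom_eq {x : V} {l₁ : List V} (hx : x ∉ l₁) (l₂ : List V) :
    suffixFrom x (l₁ ++ x :: l₂) = x :: l₂ := by
  induction l₁ with
  | nil => simp [suffixFrom]
  | cons a t ih =>
    have ha : a ≠ x := fun h => hx (by simp [h])
    simp only [List.cons_append, suffixFrom, if_neg ha]
    exact ih (fun h => hx (by simp [h]))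

theorem prefixTo_eq {x : V} {l₁ : List V} (hx : x ∉ l₁) (l₂ : List V) :
    prefixTo x (l₁ ++ x :: l₂) = l₁ := by
  induction l₁ with
  | nil => simp [prefixTo]
  | cons a t ih =>
    have ha : a ≠ x := fun h => hx (by simp [h])
    simp only [List.cons_append, prefixTo, if_neg ha]
    rw [ih (fun h => hx (by simp [h]))]

/-- The last element of `l` belonging to `F` (default `d`). -/
noncomputable def lastIn (d : V) (F : Set V) (l : List V) : V :=
  (upTo F l.reverse).getLast?.getD d

theorem lastIn_spec {F : Set V} {l : List V} (d : V) (h : ∃ y ∈ l, y ∈ F) :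
    ∃ l₁ l₂, l = l₁ ++ (lastIn d F l) :: l₂ ∧ lastIn d F l ∈ F ∧ (∀ y ∈ l₂, y ∉ F) ∧
      upTo F l.reverse = l₂.reverse ++ [lastIn d F l] := by
  rcases upTo_spec F l.reverse with ⟨-, h2⟩ | ⟨m₁, c, m₂, hdec, hc, hcl, heq⟩
  · obtain ⟨y, hy, hyF⟩ := h
    exact absurd hyF (h2 y (by simpa using hy))
  · have hlast : lastIn d F l = c := by
      rw [lastIn, heq]
      simp
    have hl : l = m₂.reverse ++ c :: m₁.reverse := by
      have := congrArg List.reverse hdec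
      simpa [List.reverse_append] using this
    refine ⟨m₂.reverse, m₁.reverse, by rw [hlast]; exact hl, hlast ▸ hc, ?_, by rw [hlast, heq]; simp⟩
    intro y hy
    exact hcl y (by simpa using hy)

end Stmt3Aux
namespace Stmt3Aux

open Classical List

variable {V : Type u}

theorem not_nodup_decomp {l : List V} (h : ¬ l.Nodup) :
    ∃ (l₁ : List V) (x : V) (l₂ l₃ : List V), l = l₁ ++ x :: (l₂ ++ x :: l₃) := by
  induction l with
  | nil => exact absurd List.nodup_nil h
  | cons a t ih =>
    by_cases ha : a ∈ t
    · obtain ⟨s, u, rfl⟩ := List.append_of_mem ha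
      exact ⟨[], a, s, u, by simp⟩
    · have ht : ¬ t.Nodup := fun hnd => h (List.nodup_cons.mpr ⟨ha, hnd⟩)
      obtain ⟨l₁, x, l₂, l₃, rfl⟩ := ih ht
      exact ⟨a :: l₁, x, l₂, l₃, by simp⟩

theorem exists_nodup_chain {R : V → V → Prop} :
    ∀ (n : ℕ) (l : List V), l.length ≤ n → l ≠ [] → l.Chain' R →
    ∃ m : List V, m ≠ [] ∧ m.Chain' R ∧ m.Nodup ∧ m.head? = l.head? ∧
      m.getLast? = l.getLast? ∧ ∀ y ∈ m, y ∈ l := by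
  intro n
  induction n with
  | zero =>
    intro l hl hne _
    exact absurd (List.length_eq_zero_iff.mp (Nat.le_zero.mp hl)) hne
  | succ n ih =>
    intro l hl hne hch
    by_cases hnd : l.Nodup
    · exact ⟨l, hne, hch, hnd, rfl, rfl, fun y hy => hy⟩
    · obtain ⟨l₁, x, l₂, l₃, rfl⟩ := not_nodup_decomp hnd
      have hch1 : List.Chain' R (l₁ ++ [x]) := (List.isChain_split.mp hch).1
      have hch2 : List.Chain' R ((x :: l₂) ++ x :: l₃) := by
        exact (List.isChain_split.mp hch).2
      have hch3 : List.Chain' R (x :: l₃) := (List.isChain_split.mp hch2).2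
      have hchm : List.Chain' R (l₁ ++ x :: l₃) := List.isChain_split.mpr ⟨hch1, hch3⟩
      have hlen : (l₁ ++ x :: l₃).length ≤ n := by
        have := hl
        simp only [List.length_append, List.length_cons] at this ⊢
        omega
      obtain ⟨m, h1, h2, h3, h4, h5, h6⟩ := ih (l₁ ++ x :: l₃) hlen (by simp) hchm
      refine ⟨m, h1, h2, h3, ?_, ?_, ?_⟩
      · rw [h4]; cases l₁ <;> simp
      · have e1 : l₁ ++ x :: (l₂ ++ x :: l₃) = l₁ ++ ((x :: l₂) ++ (x :: l₃)) := by simp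
        rw [h5, e1]
        obtain ⟨z, hz⟩ : ∃ z, (x :: l₃).getLast? = some z :=
          ⟨_, List.getLast?_eq_getLast (by simp)⟩
        rw [List.getLast?_append, List.getLast?_append, List.getLast?_append, hz]
        simp
      · intro y hy
        have := h6 y hy
        simp only [List.mem_append, List.mem_cons] at this ⊢
        tauto

/-- Build a `Dipath` from a vertex list. -/
noncomputable def ofVerts {E : Set (V × V)} (l : List V) (h1 : l ≠ [])
    (h2 : List.Chain' (fun a b => (a, b) ∈ E) l) (h3 : l.Nodup) : Dipath E where
  start := l.head h1
  rest := l.tail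
  chain := by
    have := h2
    rw [← List.cons_head_tail h1] at this
    exact this
  nodup := by rw [List.cons_head_tail h1]; exact h3

@[simp] theorem verts_ofVerts {E : Set (V × V)} (l : List V) (h1 : l ≠ [])
    (h2 : List.Chain' (fun a b => (a, b) ∈ E) l) (h3 : l.Nodup) :
    (ofVerts l h1 h2 h3 : Dipath E).verts = l := by
  simp [ofVerts, Dipath.verts, List.cons_head_tail]

theorem Dipath.ext_verts {E : Set (V × V)} {p q : Dipath E} (h : p.verts = q.verts) : p = q := by
  cases p; cases q
  simp only [Dipath.verts, List.cons.injEq] at h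
  obtain ⟨h1, h2⟩ := h
  subst h1; subst h2; rfl

theorem verts_ne_nil {E : Set (V × V)} (p : Dipath E) : p.verts ≠ [] := List.cons_ne_nil _ _

theorem chain'_verts {E : Set (V × V)} (p : Dipath E) :
    List.Chain' (fun a b => (a, b) ∈ E) p.verts := p.chain

theorem nodup_verts {E : Set (V × V)} (p : Dipath E) : p.verts.Nodup := p.nodup

theorem head_verts {E : Set (V × V)} (p : Dipath E) : p.verts.head (verts_ne_nil p) = p.start := rfl

theorem last_eq_getLast {E : Set (V × V)} (p : Dipath E) :
    p.last = p.verts.getLast (verts_ne_nil p) := rfl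

theorem mem_support_iff {E : Set (V × V)} (p : Dipath E) (x : V) :
    x ∈ p.support ↔ x ∈ p.verts := Iff.rfl

theorem head?_append_cons (A : List V) (x : V) (s t : List V) :
    (A ++ x :: s).head? = (A ++ x :: t).head? := by cases A <;> simp

theorem zip_tail_last : ∀ (l : List V) (a b : V),
    ((l ++ [a, b]).zip (l ++ [a, b]).tail).getLast? = some (a, b) := by
  intro l
  induction l with
  | nil => intro a b; simp
  | cons c t ih =>
    intro a b
    cases t with
    | nil => simp
    | cons d t' =>
      have : ((c :: (d :: t') ++ [a, b]).zip ((c :: (d :: t') ++ [a, b])).tail) =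
          (c, d) :: (((d :: t') ++ [a, b]).zip ((d :: t') ++ [a, b]).tail) := by
        simp [List.zip_cons_cons]
      rw [this, List.getLast?_cons, ih a b]
      rfl

theorem lastEdge?_of_decomp {E : Set (V × V)} (p : Dipath E) (l : List V) (a : V)
    (h : p.verts = l ++ [a, v']) : p.lastEdge? = some (a, v') := by
  have : p.edges = p.verts.zip p.verts.tail := rfl
  rw [Dipath.lastEdge?, this, h]
  exact zip_tail_last l a v'

end Stmt3Aux
namespace Stmt3Aux

open Classical List

variable {V : Type u} {E : Set (V × V)} (r v : V) (S : Set V) (Q P : Set (Dipath E))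

/-- The last `S`-vertex of a path. -/
noncomputable def sV (p : Dipath E) : V := lastIn r S p.verts

/-- The part of a path from its last `S`-vertex on. -/
noncomputable def afterS (p : Dipath E) : List V := suffixFrom (sV r S p) p.verts

/-- Same, without the final vertex. -/
noncomputable def aft (p : Dipath E) : List V := (afterS r S p).dropLast

/-- The union of terminal segments of `P`-paths after the last `Z`-vertex. -/
noncomputable def tails (Z : Set V) : Set V :=
  ⋃ p ∈ P, {y | y ∈ upTo Z (aft r S p).reverse}

/-- One step of the fixpoint operator: the parts of `Q`-paths after `S` up to the
first vertex on a current tail. -/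
noncomputable def PsiFun (Z : Set V) : Set V :=
  ⋃ q ∈ Q, {y | y ∈ upTo (tails r S P Z) (aft r S q)}

theorem tails_anti {Z Z' : Set V} (h : Z ⊆ Z') : tails r S P Z' ⊆ tails r S P Z := by
  intro y hy
  simp only [tails, Set.mem_iUnion, Set.mem_setOf_eq] at hy ⊢
  obtain ⟨p, hp, hy⟩ := hy
  exact ⟨p, hp, (upTo_mono h _).subset hy⟩

theorem psiFun_mono : Monotone (PsiFun r S Q P) := by
  intro Z Z' h y hy
  simp only [PsiFun, Set.mem_iUnion, Set.mem_setOf_eq] at hy ⊢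
  obtain ⟨q, hq, hy⟩ := hy
  exact ⟨q, hq, (upTo_mono (tails_anti r S P h) _).subset hy⟩

/-- The fixpoint operator. -/
noncomputable def Psi : Set V →o Set V := ⟨PsiFun r S Q P, psiFun_mono r S Q P⟩

/-- The fixpoint: the set of vertices on used initial parts of `Q`-paths. -/
noncomputable def Zs : Set V := OrderHom.lfp (Psi r S Q P)

theorem Zs_fix : PsiFun r S Q P (Zs r S Q P) = Zs r S Q P :=
  OrderHom.map_lfp (Psi r S Q P)

/-- The switch vertex of a `P`-path. -/
noncomputable def xst (p : Dipath E) : V := lastIn r (Zs r S Q P) (aft r S p)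

/-- The used terminal segment of a `P`-path. -/
noncomputable def tailFull (p : Dipath E) : List V := suffixFrom (xst r S Q P p) p.verts

/-- The `Q`-path feeding a given `P`-path. -/
noncomputable def qOf (p : Dipath E) : Dipath E :=
  if h : ∃ q, q ∈ Q ∧ xst r S Q P p ∈ upTo (tails r S P (Zs r S Q P)) (aft r S q)
  then h.choose else p

/-- The vertex list of the rerouted path for `p ∈ P`. -/
noncomputable def RhoV (p : Dipath E) : List V :=
  prefixTo (xst r S Q P p) (qOf r S Q P p).verts ++ tailFull r S Q P p

/-- `Q`-paths that are disjoint from all used tails. -/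
def cleanQ (q : Dipath E) : Prop := ∀ y ∈ aft r S q, y ∉ tails r S P (Zs r S Q P)

/-- The final path system. -/
noncomputable def Rset : Set (Dipath E) :=
  {d | (∃ p ∈ P, d.verts = RhoV r S Q P p) ∨ (d ∈ Q ∧ cleanQ r S Q P d)}

end Stmt3Aux
namespace Stmt3Aux

open Classical List

variable {V : Type u} {E : Set (V × V)} {r v : V} {S : Set V} {Q P : Set (Dipath E)}

theorem verts_getLast? {d : Dipath E} (h : d.last = v) : d.verts.getLast? = some v := by
  rw [List.getLast?_eq_getLast (verts_ne_nil d), ← last_eq_getLast, h]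

theorem verts_head? (d : Dipath E) : d.verts.head? = some d.start := rfl

/-- There is no `r`–`v` walk avoiding `S`. -/
theorem no_sfree
    (hsep : ∀ d : Dipath E, d.start = r → d.last = v → (d.support ∩ S).Nonempty)
    (l : List V) (hne : l ≠ []) (hch : List.Chain' (fun a b => (a, b) ∈ E) l)
    (hh : l.head? = some r) (hl : l.getLast? = some v) (hfree : ∀ y ∈ l, y ∉ S) : False := by
  obtain ⟨m, h1, h2, h3, h4, h5, h6⟩ := exists_nodup_chain l.length l le_rfl hne hch
  set d : Dipath E := ofVerts m h1 h2 h3 with hd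
  have hdv : d.verts = m := verts_ofVerts m h1 h2 h3
  have hds : d.start = r := by
    have : d.verts.head? = some r := by rw [hdv, h4]; exact hh
    rw [verts_head?] at this
    exact Option.some_injective _ this
  have hdl : d.last = v := by
    have : d.verts.getLast? = some v := by rw [hdv, h5]; exact hl
    rw [List.getLast?_eq_getLast (verts_ne_nil d), ← last_eq_getLast] at this
    exact Option.some_injective _ this
  obtain ⟨y, hy1, hy2⟩ := hsep d hds hdl
  exact hfree y (h6 y (by rwa [mem_support_iff, hdv] at hy1)) hy2

/-- Gluing an initial part of a `Q`-path with a terminal part of a `P`-path, all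
avoiding `S`, contradicts `S` being a separation. -/
theorem glue_contra
    (hsep : ∀ d : Dipath E, d.start = r → d.last = v → (d.support ∩ S).Nonempty)
    {q p : Dipath E} {u : V} {X Xr W Wr : List V}
    (hqs : q.start = r) (hpl : p.last = v)
    (hqdec : q.verts = X ++ u :: Xr) (hpdec : p.verts = W ++ u :: Wr)
    (hX : ∀ y ∈ X, y ∉ S) (hu : u ∉ S) (hWr : ∀ y ∈ Wr, y ∉ S)
    (hur : u ≠ r) : False := by
  have hch1 : List.Chain' (fun a b => (a, b) ∈ E) (X ++ [u]) :=
    (List.isChain_split.mp (hqdec ▸ chain'_verts q)).1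
  have hch2 : List.Chain' (fun a b => (a, b) ∈ E) (u :: Wr) :=
    (List.isChain_split.mp (hpdec ▸ chain'_verts p)).2
  have hch : List.Chain' (fun a b => (a, b) ∈ E) (X ++ u :: Wr) :=
    List.isChain_split.mpr ⟨hch1, hch2⟩
  have hh : q.verts.head? = some r := by rw [verts_head?, hqs]
  have hlast : (u :: Wr).getLast? = some v := by
    have h := verts_getLast? hpl (d := p)
    rw [hpdec, List.getLast?_append] at h
    obtain ⟨z, hz⟩ : ∃ z, (u :: Wr).getLast? = some z :=
      ⟨_, List.getLast?_eq_getLast (by simp)⟩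
    rw [hz] at h
    simp at h
    rw [hz, h]
  apply no_sfree hsep (X ++ u :: Wr) (by simp) hch
  · cases X with
    | nil =>
      exfalso
      rw [hqdec] at hh
      simp at hh
      exact hur hh
    | cons a t =>
      rw [hqdec] at hh
      simpa using hh
  · rw [List.getLast?_append, hlast]
    simp
  · intro y hy
    rcases List.mem_append.mp hy with hy | hy
    · exact hX y hy
    · rcases List.mem_cons.mp hy with rfl | hy
      · exact hu
      · exact hWr y hy

theorem eq_concat_of_getLast? {l : List V} {a : V} (h : l.getLast? = some a) :
    ∃ l', l = l' ++ [a] := by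
  cases l with
  | nil => simp at h
  | cons b t =>
    have hne : (b :: t : List V) ≠ [] := by simp
    refine ⟨(b :: t).dropLast, ?_⟩
    have h2 := List.dropLast_append_getLast hne
    rw [List.getLast?_eq_getLast hne] at h
    have := Option.some_injective _ h
    rw [this] at h2
    exact h2.symm

/-- Decomposition of a path at its last `S`-vertex. -/
theorem basic_decomp (hvS : v ∉ S) {d : Dipath E} (hlast : d.last = v)
    (hmeet : (d.support ∩ S).Nonempty) :
    ∃ g₁ g₂, d.verts = g₁ ++ sV r S d :: (g₂ ++ [v]) ∧ sV r S d ∈ S ∧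
      (∀ y ∈ g₂, y ∉ S) ∧ afterS r S d = sV r S d :: (g₂ ++ [v]) ∧
      aft r S d = sV r S d :: g₂ := by
  obtain ⟨x, hx1, hx2⟩ := hmeet
  obtain ⟨l₁, l₂, hdec, hsS, hl₂, -⟩ :=
    lastIn_spec (F := S) (l := d.verts) r ⟨x, (mem_support_iff d x).mp hx1, hx2⟩
  have hsv : sV r S d = lastIn r S d.verts := rfl
  rw [← hsv] at hdec hsS
  have hvlast : d.verts.getLast? = some v := verts_getLast? hlast
  have hl2ne : l₂ ≠ [] := by
    rintro rfl
    rw [hdec, List.getLast?_append] at hvlast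
    simp at hvlast
    exact hvS (hvlast ▸ hsS)
  obtain ⟨g₂, hg₂⟩ := eq_concat_of_getLast? (l := l₂) (a := v) (by
    rw [hdec, List.getLast?_append] at hvlast
    obtain ⟨z, hz⟩ : ∃ z, (sV r S d :: l₂).getLast? = some z :=
      ⟨_, List.getLast?_eq_getLast (by simp)⟩
    rw [hz] at hvlast
    simp at hvlast
    rw [List.getLast?_cons] at hz
    have hz2 : l₂.getLast?.getD (sV r S d) = v := by
      rw [hvlast] at hz
      simpa using hz
    cases hl : l₂.getLast? with
    | none => exact absurd hl (by simp [hl2ne])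
    | some w =>
      rw [hl] at hz2
      simp at hz2
      rw [hz2])
  subst hg₂
  have hsnotin : sV r S d ∉ l₁ := by
    have hnd := nodup_verts d
    rw [hdec] at hnd
    intro hmem
    exact (List.nodup_append'.mp hnd).2.2 hmem (by simp)
  have hafterS : afterS r S d = sV r S d :: (g₂ ++ [v]) := by
    rw [afterS, hdec]
    exact suffixFrom_eq hsnotin _
  refine ⟨l₁, g₂, hdec, hsS, ?_, hafterS, ?_⟩
  · intro y hy
    exact hl₂ y (by simp [hy])
  · rw [aft, hafterS]
    have : sV r S d :: (g₂ ++ [v]) = (sV r S d :: g₂) ++ [v] := by simp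
    rw [this, List.dropLast_concat]

end Stmt3Aux
namespace Stmt3Aux

open Classical List

variable {V : Type u} {E : Set (V × V)} {r v : V} {S : Set V} {Q P : Set (Dipath E)}

theorem aft_facts (hrS : r ∉ S) (hvS : v ∉ S) {d : Dipath E} (hstart : d.start = r)
    (hlast : d.last = v) (hmeet : (d.support ∩ S).Nonempty) :
    (∀ y ∈ aft r S d, y ∈ d.verts) ∧ (∀ y ∈ aft r S d, y ≠ r) ∧
      (∀ y ∈ aft r S d, y ≠ v) ∧ (∀ y ∈ aft r S d, y ∈ S → y = sV r S d) := by
  obtain ⟨g₁, g₂, hdec, hsS, hg₂, -, haft⟩ := basic_decomp hvS hlast hmeet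
  have hnd := nodup_verts d
  refine ⟨?_, ?_, ?_, ?_⟩
  · intro y hy
    rw [haft] at hy
    rw [hdec]
    rcases List.mem_cons.mp hy with rfl | hy <;> simp [hy]
  · intro y hy
    rw [haft] at hy
    intro hyr
    cases g₁ with
    | nil =>
      have : d.start = sV r S d := by
        have := hdec; rw [show d.verts = d.start :: d.rest from rfl] at this
        simp at this
        exact this.1
      exact hrS (by rw [hstart] at this; rw [this]; exact hsS)
    | cons a t =>
      have ha : a = r := by
        have := hdec; rw [show d.verts = d.start :: d.rest from rfl] at this
        simp at this
        rw [← this.1, hstart]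
      have hrest : d.rest = t ++ sV r S d :: (g₂ ++ [v]) := by
        have := hdec; rw [show d.verts = d.start :: d.rest from rfl] at this
        simp at this
        exact this.2
      have : r ∉ d.rest := by
        have h2 := d.nodup
        rw [List.nodup_cons, hstart] at h2
        exact h2.1
      apply this
      rw [hrest]
      rw [hyr] at hy
      rcases List.mem_cons.mp hy with h | h
      · exact List.mem_append_right _ (List.mem_cons.mpr (Or.inl h))
      · exact List.mem_append_right _ (List.mem_cons.mpr (Or.inr (List.mem_append_left _ h)))
  · intro y hy
    rw [haft] at hy
    intro hyv
    have he : d.verts = (g₁ ++ sV r S d :: g₂) ++ [v] := by rw [hdec]; simp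
    rw [he] at hnd
    have hdisj := (List.nodup_append'.mp hnd).2.2
    refine hdisj ?_ (show v ∈ [v] by simp)
    rw [← hyv]
    rcases List.mem_cons.mp hy with h | h
    · exact List.mem_append_right _ (by rw [h]; simp)
    · exact List.mem_append_right _ (by simp [h])
  · intro y hy hyS
    rw [haft] at hy
    rcases List.mem_cons.mp hy with rfl | hy
    · rfl
    · exact absurd hyS (hg₂ y hy)

theorem supp_unique {A : Set (Dipath E)} (hA : IsRVSystem E r v A) {d d' : Dipath E}
    (hd : d ∈ A) (hd' : d' ∈ A) {y : V} (hy : y ∈ d.verts) (hy' : y ∈ d'.verts)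
    (hyr : y ≠ r) (hyv : y ≠ v) : d = d' := by
  by_contra hne
  have := hA.2 hd hd' hne (Set.mem_inter hy hy')
  rcases this with h | h
  · exact hyr h
  · exact hyv h

theorem sV_unique_Q (hvS : v ∉ S) (hQ : IsRVSystem E r v Q) (hQo : Orthogonal Q S)
    {q : Dipath E} (hq : q ∈ Q) {x : V} (hx1 : x ∈ q.verts) (hx2 : x ∈ S) :
    x = sV r S q := by
  obtain ⟨y, hy, huniq⟩ := hQo.1 q hq
  have h1 : x = y := huniq x ⟨hx1, hx2⟩
  obtain ⟨g₁, g₂, hdec, hsS, -, -, -⟩ :=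
    basic_decomp (r := r) hvS (hQ.1 q hq).2 ⟨x, hx1, hx2⟩
  have h2 : sV r S q = y := huniq _ ⟨by rw [mem_support_iff, hdec]; simp, hsS⟩
  rw [h1, h2]

theorem q_decomp (hvS : v ∉ S)
    (hsep : ∀ d : Dipath E, d.start = r → d.last = v → (d.support ∩ S).Nonempty)
    (hQ : IsRVSystem E r v Q) (hQo : Orthogonal Q S) {q : Dipath E} (hq : q ∈ Q) :
    ∃ g₁ g₂, q.verts = g₁ ++ sV r S q :: (g₂ ++ [v]) ∧ sV r S q ∈ S ∧
      (∀ y ∈ g₁, y ∉ S) ∧ (∀ y ∈ g₂, y ∉ S) ∧ aft r S q = sV r S q :: g₂ ∧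
      afterS r S q = sV r S q :: (g₂ ++ [v]) := by
  have hmeet := hsep q (hQ.1 q hq).1 (hQ.1 q hq).2
  obtain ⟨g₁, g₂, hdec, hsS, hg₂, hafterS, haft⟩ := basic_decomp hvS (hQ.1 q hq).2 hmeet
  refine ⟨g₁, g₂, hdec, hsS, ?_, hg₂, haft, hafterS⟩
  intro y hy hyS
  have hyv : y ∈ q.verts := by rw [hdec]; simp [hy]
  have := sV_unique_Q hvS hQ hQo hq hyv hyS
  rw [this] at hy
  have hnd := nodup_verts q
  rw [hdec] at hnd
  exact (List.nodup_append'.mp hnd).2.2 hy (by simp)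

theorem S_subset_Zs (hvS : v ∉ S)
    (hsep : ∀ d : Dipath E, d.start = r → d.last = v → (d.support ∩ S).Nonempty)
    (hQ : IsRVSystem E r v Q) (hQo : Orthogonal Q S) : S ⊆ Zs r S Q P := by
  intro x hx
  obtain ⟨q, hq, hxq⟩ := hQo.2 x hx
  have hxv : x ∈ q.verts := hxq
  have hsv : x = sV r S q := sV_unique_Q hvS hQ hQo hq hxv hx
  obtain ⟨g₁, g₂, hdec, hsS, hg₁, hg₂, haft, -⟩ := q_decomp hvS hsep hQ hQo hq
  rw [← Zs_fix r S Q P]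
  simp only [PsiFun, Set.mem_iUnion, Set.mem_setOf_eq]
  exact ⟨q, hq, by rw [haft, hsv]; exact head_mem_upTo _ _ _⟩

theorem Zs_mem_aft {y : V} (hy : y ∈ Zs r S Q P) :
    ∃ q ∈ Q, y ∈ upTo (tails r S P (Zs r S Q P)) (aft r S q) := by
  rw [← Zs_fix r S Q P] at hy
  simpa [PsiFun, Set.mem_iUnion] using hy

theorem pFacts (hrS : r ∉ S) (hvS : v ∉ S)
    (hsep : ∀ d : Dipath E, d.start = r → d.last = v → (d.support ∩ S).Nonempty)
    (hQ : IsRVSystem E r v Q) (hQo : Orthogonal Q S) (hP : IsRVSystem E r v P)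
    {p : Dipath E} (hp : p ∈ P) :
    ∃ f₁ m₁ m₂,
      p.verts = (f₁ ++ m₁) ++ xst r S Q P p :: (m₂ ++ [v]) ∧
      aft r S p = m₁ ++ xst r S Q P p :: m₂ ∧
      xst r S Q P p ∈ Zs r S Q P ∧
      (∀ y ∈ m₂, y ∉ Zs r S Q P) ∧
      upTo (Zs r S Q P) (aft r S p).reverse = m₂.reverse ++ [xst r S Q P p] ∧
      tailFull r S Q P p = xst r S Q P p :: (m₂ ++ [v]) ∧
      (∀ y ∈ m₂, y ∉ S) ∧
      (∀ y ∈ m₂, y ∈ tails r S P (Zs r S Q P)) := by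
  have hst := (hP.1 p hp).1
  have hlst := (hP.1 p hp).2
  have hmeet := hsep p hst hlst
  obtain ⟨f₁, g₂, hdec, hsS, hg₂, -, haft⟩ := basic_decomp hvS hlst hmeet
  have hhit : ∃ y ∈ aft r S p, y ∈ Zs r S Q P :=
    ⟨sV r S p, by rw [haft]; simp, S_subset_Zs hvS hsep hQ hQo hsS⟩
  obtain ⟨m₁, m₂, haft2, hxZ, hm₂, hupto⟩ := lastIn_spec r hhit
  have hxdef : lastIn r (Zs r S Q P) (aft r S p) = xst r S Q P p := rfl
  rw [hxdef] at haft2 hxZ hupto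
  have h1 : sV r S p :: g₂ = m₁ ++ xst r S Q P p :: m₂ := by rw [← haft, haft2]
  have hverts : p.verts = (f₁ ++ m₁) ++ xst r S Q P p :: (m₂ ++ [v]) := by
    rw [hdec, show sV r S p :: (g₂ ++ [v]) = (sV r S p :: g₂) ++ [v] by simp, h1]
    simp
  have hnd := nodup_verts p
  rw [hverts] at hnd
  have hxnot : xst r S Q P p ∉ f₁ ++ m₁ := fun hmem =>
    (List.nodup_append'.mp hnd).2.2 hmem (by simp)
  have htail : tailFull r S Q P p = xst r S Q P p :: (m₂ ++ [v]) := by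
    rw [tailFull, hverts]
    exact suffixFrom_eq hxnot _
  refine ⟨f₁, m₁, m₂, hverts, haft2, hxZ, hm₂, hupto, htail, ?_, ?_⟩
  case refine_2 =>
    intro y hy
    simp only [tails, Set.mem_iUnion, Set.mem_setOf_eq]
    exact ⟨p, hp, by rw [hupto]; simp [hy]⟩
  intro y hy
  cases m₁ with
  | nil =>
    have h2 : g₂ = m₂ := by
      have h := h1
      rw [List.nil_append] at h
      injection h
    exact hg₂ y (by rw [h2]; exact hy)
  | cons a t =>
    have h2 : g₂ = t ++ xst r S Q P p :: m₂ := by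
      have h := h1
      rw [List.cons_append] at h
      injection h
    exact hg₂ y (by rw [h2]; simp [hy])

theorem xst_tails (hrS : r ∉ S) (hvS : v ∉ S)
    (hsep : ∀ d : Dipath E, d.start = r → d.last = v → (d.support ∩ S).Nonempty)
    (hQ : IsRVSystem E r v Q) (hQo : Orthogonal Q S) (hP : IsRVSystem E r v P)
    {p : Dipath E} (hp : p ∈ P) : xst r S Q P p ∈ tails r S P (Zs r S Q P) := by
  obtain ⟨f₁, m₁, m₂, -, -, -, -, hupto, -, -, -⟩ := pFacts hrS hvS hsep hQ hQo hP hp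
  simp only [tails, Set.mem_iUnion, Set.mem_setOf_eq]
  exact ⟨p, hp, by rw [hupto]; simp⟩

theorem qOf_spec (hrS : r ∉ S) (hvS : v ∉ S)
    (hsep : ∀ d : Dipath E, d.start = r → d.last = v → (d.support ∩ S).Nonempty)
    (hQ : IsRVSystem E r v Q) (hQo : Orthogonal Q S) (hP : IsRVSystem E r v P)
    {p : Dipath E} (hp : p ∈ P) :
    qOf r S Q P p ∈ Q ∧
      xst r S Q P p ∈ upTo (tails r S P (Zs r S Q P)) (aft r S (qOf r S Q P p)) := by
  obtain ⟨f₁, m₁, m₂, -, -, hxZ, -, -, -, -, -⟩ := pFacts hrS hvS hsep hQ hQo hP hp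
  have hex : ∃ q, q ∈ Q ∧
      xst r S Q P p ∈ upTo (tails r S P (Zs r S Q P)) (aft r S q) := by
    obtain ⟨q, hq, h⟩ := Zs_mem_aft hxZ
    exact ⟨q, hq, h⟩
  rw [qOf, dif_pos hex]
  exact hex.choose_spec

theorem qFacts (hrS : r ∉ S) (hvS : v ∉ S)
    (hsep : ∀ d : Dipath E, d.start = r → d.last = v → (d.support ∩ S).Nonempty)
    (hQ : IsRVSystem E r v Q) (hQo : Orthogonal Q S) (hP : IsRVSystem E r v P)
    {p : Dipath E} (hp : p ∈ P) :
    ∃ g₁ n₁ n₂,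
      (qOf r S Q P p).verts = (g₁ ++ n₁) ++ xst r S Q P p :: (n₂ ++ [v]) ∧
      aft r S (qOf r S Q P p) = n₁ ++ xst r S Q P p :: n₂ ∧
      (∀ y ∈ n₁, y ∉ tails r S P (Zs r S Q P)) ∧
      (∀ y ∈ g₁, y ∉ S) ∧
      prefixTo (xst r S Q P p) (qOf r S Q P p).verts = g₁ ++ n₁ ∧
      (sV r S (qOf r S Q P p) ∈ n₁ ∨ sV r S (qOf r S Q P p) = xst r S Q P p) ∧
      (∀ y ∈ g₁, y ∈ (qOf r S Q P p).verts ∧ y ∉ afterS r S (qOf r S Q P p) ∧ y ∉ S) := by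
  obtain ⟨hqQ, hxupto⟩ := qOf_spec hrS hvS hsep hQ hQo hP hp
  obtain ⟨g₁, g₂, hdec, hsS, hg₁, hg₂, haft, hafterS⟩ := q_decomp hvS hsep hQ hQo hqQ
  have hxt : xst r S Q P p ∈ tails r S P (Zs r S Q P) := xst_tails hrS hvS hsep hQ hQo hP hp
  rcases upTo_spec (tails r S P (Zs r S Q P)) (aft r S (qOf r S Q P p)) with
    ⟨heq, hfree⟩ | ⟨n₁, c, n₂, haft2, hc, hn₁, hup⟩
  · exact absurd hxt (hfree _ (mem_of_mem_upTo hxupto))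
  · have hxc : xst r S Q P p = c := by
      have h := hxupto
      rw [hup] at h
      rcases List.mem_append.mp h with h | h
      · exact absurd hxt (hn₁ _ h)
      · simpa using h
    subst hxc
    have h1 : sV r S (qOf r S Q P p) :: g₂ = n₁ ++ xst r S Q P p :: n₂ := by
      rw [← haft, haft2]
    have hverts : (qOf r S Q P p).verts =
        (g₁ ++ n₁) ++ xst r S Q P p :: (n₂ ++ [v]) := by
      rw [hdec, show sV r S (qOf r S Q P p) :: (g₂ ++ [v]) =
        (sV r S (qOf r S Q P p) :: g₂) ++ [v] by simp, h1]
      simp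
    have hnd := nodup_verts (qOf r S Q P p)
    rw [hverts] at hnd
    have hxnot : xst r S Q P p ∉ g₁ ++ n₁ := fun hmem =>
      (List.nodup_append'.mp hnd).2.2 hmem (by simp)
    refine ⟨g₁, n₁, n₂, hverts, haft2, hn₁, hg₁, ?_, ?_, ?_⟩
    case refine_3 =>
      intro y hy
      have hndq := nodup_verts (qOf r S Q P p)
      rw [hdec] at hndq
      refine ⟨by rw [hdec]; simp [hy], ?_, hg₁ y hy⟩
      rw [hafterS]
      exact fun hmem => (List.nodup_append'.mp hndq).2.2 hy hmem
    · rw [hverts]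
      exact prefixTo_eq hxnot _
    · cases n₁ with
      | nil =>
        right
        have h := h1
        rw [List.nil_append] at h
        injection h
      | cons a t =>
        left
        have h := h1
        rw [List.cons_append] at h
        have ha : sV r S (qOf r S Q P p) = a := by injection h
        rw [ha]
        simp

end Stmt3Aux
namespace Stmt3Aux

open Classical List

variable {V : Type u} {E : Set (V × V)} {r v : V} {S : Set V} {Q P : Set (Dipath E)}

theorem tails_split (hrS : r ∉ S) (hvS : v ∉ S)
    (hsep : ∀ d : Dipath E, d.start = r → d.last = v → (d.support ∩ S).Nonempty)
    (hQ : IsRVSystem E r v Q) (hQo : Orthogonal Q S) (hP : IsRVSystem E r v P)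
    {y : V} (hy : y ∈ tails r S P (Zs r S Q P)) :
    ∃ p' ∈ P, y ∈ aft r S p' ∧ (y = xst r S Q P p' ∨ y ∉ Zs r S Q P) := by
  simp only [tails, Set.mem_iUnion, Set.mem_setOf_eq] at hy
  obtain ⟨p', hp', hy⟩ := hy
  obtain ⟨f₁, m₁, m₂, hverts, haft2, hxZ, hm₂, hupto, htail, hmS, hmT⟩ :=
    pFacts hrS hvS hsep hQ hQo hP hp'
  rw [hupto] at hy
  rcases List.mem_append.mp hy with hy | hy
  · have hym : y ∈ m₂ := by simpa using hy
    exact ⟨p', hp', by rw [haft2]; simp [hym], Or.inr (hm₂ y hym)⟩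
  · have hyx : y = xst r S Q P p' := by simpa using hy
    exact ⟨p', hp', by rw [haft2, hyx]; simp, Or.inl hyx⟩

/-- A vertex on the pre-`S` part of a `Q`-path cannot lie on a used tail. -/
theorem before_tails_contra (hrS : r ∉ S) (hvS : v ∉ S)
    (hsep : ∀ d : Dipath E, d.start = r → d.last = v → (d.support ∩ S).Nonempty)
    (hQ : IsRVSystem E r v Q) (hQo : Orthogonal Q S) (hP : IsRVSystem E r v P)
    {q : Dipath E} (hq : q ∈ Q) {y : V}
    (hy1 : y ∈ q.verts) (hy2 : y ∉ afterS r S q)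
    (hyt : y ∈ tails r S P (Zs r S Q P)) : False := by
  obtain ⟨g₁, g₂, hdec, hsS, hg₁, hg₂, haft, hafterSq⟩ := q_decomp hvS hsep hQ hQo hq
  -- y is not in S
  have hyS : y ∉ S := by
    intro hyS
    have := sV_unique_Q hvS hQ hQo hq hy1 hyS
    apply hy2
    rw [hafterSq, ← this]
    simp
  -- y lies in g₁
  have hyg : y ∈ g₁ := by
    rw [hdec] at hy1
    rcases List.mem_append.mp hy1 with h | h
    · exact h
    · exact absurd (by rw [hafterSq]; exact h) hy2
  obtain ⟨u₁, u₂, hg⟩ := List.append_of_mem hyg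
  have hqdec : q.verts = u₁ ++ y :: (u₂ ++ sV r S q :: (g₂ ++ [v])) := by
    rw [hdec, hg]; simp
  -- the P-side
  simp only [tails, Set.mem_iUnion, Set.mem_setOf_eq] at hyt
  obtain ⟨p', hp', hyt⟩ := hyt
  obtain ⟨f₁, m₁, m₂, hverts, haft2, hxZ, hm₂, hupto, htail, hmS, hmT⟩ :=
    pFacts hrS hvS hsep hQ hQo hP hp'
  have hyaft : y ∈ aft r S p' := by
    rw [hupto] at hyt
    rw [haft2]
    rcases List.mem_append.mp hyt with h | h
    · simp [List.mem_reverse.mp h]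
    · simp [show y = xst r S Q P p' by simpa using h]
  have hyr : y ≠ r := by
    have hmeet := hsep p' (hP.1 p' hp').1 (hP.1 p' hp').2
    exact (aft_facts hrS hvS (hP.1 p' hp').1 (hP.1 p' hp').2 hmeet).2.1 y hyaft
  rw [hupto] at hyt
  rcases List.mem_append.mp hyt with h | h
  · -- y ∈ m₂
    have hym : y ∈ m₂ := by simpa using h
    obtain ⟨w₁, w₂, hw⟩ := List.append_of_mem hym
    have hpdec : p'.verts = ((f₁ ++ m₁) ++ xst r S Q P p' :: w₁) ++ y :: (w₂ ++ [v]) := by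
      rw [hverts, hw]; simp
    refine glue_contra hsep (hQ.1 q hq).1 (hP.1 p' hp').2 hqdec hpdec ?_ hyS ?_ hyr
    · intro z hz
      exact hg₁ z (by rw [hg]; simp [hz])
    · intro z hz
      rcases List.mem_append.mp hz with hz | hz
      · exact hmS z (by rw [hw]; simp [hz])
      · simp at hz
        rw [hz]; exact hvS
  · -- y = xst p'
    have hyx : y = xst r S Q P p' := by simpa using h
    have hpdec : p'.verts = (f₁ ++ m₁) ++ y :: (m₂ ++ [v]) := by rw [hverts, hyx]
    refine glue_contra hsep (hQ.1 q hq).1 (hP.1 p' hp').2 hqdec hpdec ?_ hyS ?_ hyr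
    · intro z hz
      exact hg₁ z (by rw [hg]; simp [hz])
    · intro z hz
      rcases List.mem_append.mp hz with hz | hz
      · exact hmS z hz
      · simp at hz
        rw [hz]; exact hvS

/-- Two `P`-paths fed by the same `Q`-path have the same switch vertex. -/
theorem xst_eq_of_qOf_eq (hrS : r ∉ S) (hvS : v ∉ S)
    (hsep : ∀ d : Dipath E, d.start = r → d.last = v → (d.support ∩ S).Nonempty)
    (hQ : IsRVSystem E r v Q) (hQo : Orthogonal Q S) (hP : IsRVSystem E r v P)
    {p p' : Dipath E} (hp : p ∈ P) (hp' : p' ∈ P)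
    (h : qOf r S Q P p = qOf r S Q P p') : xst r S Q P p = xst r S Q P p' := by
  have h1 := (qOf_spec hrS hvS hsep hQ hQo hP hp).2
  have h2 := (qOf_spec hrS hvS hsep hQ hQo hP hp').2
  rw [← h] at h2
  have ht1 := xst_tails hrS hvS hsep hQ hQo hP hp
  have ht2 := xst_tails hrS hvS hsep hQ hQo hP hp'
  rcases upTo_spec (tails r S P (Zs r S Q P)) (aft r S (qOf r S Q P p)) with
    ⟨heq, hfree⟩ | ⟨n₁, c, n₂, haft2, hc, hn₁, hup⟩
  · exact absurd ht1 (hfree _ (mem_of_mem_upTo h1))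
  · have e1 : xst r S Q P p = c := by
      rw [hup] at h1
      rcases List.mem_append.mp h1 with h | h
      · exact absurd ht1 (hn₁ _ h)
      · simpa using h
    have e2 : xst r S Q P p' = c := by
      rw [hup] at h2
      rcases List.mem_append.mp h2 with h | h
      · exact absurd ht2 (hn₁ _ h)
      · simpa using h
    rw [e1, e2]

/-- Equal switch vertices force equal `P`-paths. -/
theorem p_eq_of_xst_eq (hrS : r ∉ S) (hvS : v ∉ S)
    (hsep : ∀ d : Dipath E, d.start = r → d.last = v → (d.support ∩ S).Nonempty)
    (hQ : IsRVSystem E r v Q) (hQo : Orthogonal Q S) (hP : IsRVSystem E r v P)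
    {p p' : Dipath E} (hp : p ∈ P) (hp' : p' ∈ P)
    (h : xst r S Q P p = xst r S Q P p') : p = p' := by
  obtain ⟨f₁, m₁, m₂, hverts, haft2, -, -, -, -, -, -⟩ := pFacts hrS hvS hsep hQ hQo hP hp
  obtain ⟨f₁', m₁', m₂', hverts', haft2', -, -, -, -, -, -⟩ := pFacts hrS hvS hsep hQ hQo hP hp'
  have hmeet := hsep p (hP.1 p hp).1 (hP.1 p hp).2
  have haf := aft_facts hrS hvS (hP.1 p hp).1 (hP.1 p hp).2 hmeet
  have hx1 : xst r S Q P p ∈ aft r S p := by rw [haft2]; simp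
  have hx2 : xst r S Q P p ∈ aft r S p' := by rw [h, haft2']; simp
  have hmeet' := hsep p' (hP.1 p' hp').1 (hP.1 p' hp').2
  have haf' := aft_facts hrS hvS (hP.1 p' hp').1 (hP.1 p' hp').2 hmeet'
  exact supp_unique hP hp hp' (haf.1 _ hx1) (haf'.1 _ hx2)
    (haf.2.1 _ hx1) (haf.2.2.1 _ hx1)

end Stmt3Aux
namespace Stmt3Aux

open Classical List

variable {V : Type u} {E : Set (V × V)} {r v : V} {S : Set V} {Q P : Set (Dipath E)}

set_option maxHeartbeats 1000000

/-- Classification of the vertices of a rerouted path. -/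
theorem rho_mem_cases (hrS : r ∉ S) (hvS : v ∉ S)
    (hsep : ∀ d : Dipath E, d.start = r → d.last = v → (d.support ∩ S).Nonempty)
    (hQ : IsRVSystem E r v Q) (hQo : Orthogonal Q S) (hP : IsRVSystem E r v P)
    {p : Dipath E} (hp : p ∈ P) {y : V} (hy : y ∈ RhoV r S Q P p) :
    (y ∈ (qOf r S Q P p).verts ∧ y ∉ afterS r S (qOf r S Q P p) ∧ y ∉ S) ∨
    (y ∈ aft r S (qOf r S Q P p) ∧ y ∉ tails r S P (Zs r S Q P)) ∨
    y = xst r S Q P p ∨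
    (y ∈ aft r S p ∧ y ∈ tails r S P (Zs r S Q P) ∧ y ∉ Zs r S Q P ∧ y ∉ S) ∨
    y = v := by
  obtain ⟨g₁, n₁, n₂, hvertsQ, haft2Q, hn₁, hg₁S, hprefix, hsv, hg₁full⟩ :=
    qFacts hrS hvS hsep hQ hQo hP hp
  obtain ⟨f₁, m₁, m₂, hverts, haft2, hxZ, hm₂, hupto, htail, hmS, hmT⟩ :=
    pFacts hrS hvS hsep hQ hQo hP hp
  rw [RhoV, hprefix, htail] at hy
  rcases List.mem_append.mp hy with hy | hy
  · rcases List.mem_append.mp hy with hy | hy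
    · exact Or.inl (hg₁full y hy)
    · exact Or.inr (Or.inl ⟨by rw [haft2Q]; simp [hy], hn₁ y hy⟩)
  · rcases List.mem_cons.mp hy with rfl | hy
    · exact Or.inr (Or.inr (Or.inl rfl))
    · rcases List.mem_append.mp hy with hy | hy
      · exact Or.inr (Or.inr (Or.inr (Or.inl
          ⟨by rw [haft2]; simp [hy], hmT y hy, hm₂ y hy, hmS y hy⟩)))
      · simp at hy
        exact Or.inr (Or.inr (Or.inr (Or.inr hy)))

/-- The rerouted path exists as a `Dipath`. -/
theorem rho_path (hrS : r ∉ S) (hvS : v ∉ S)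
    (hsep : ∀ d : Dipath E, d.start = r → d.last = v → (d.support ∩ S).Nonempty)
    (hQ : IsRVSystem E r v Q) (hQo : Orthogonal Q S) (hP : IsRVSystem E r v P)
    {p : Dipath E} (hp : p ∈ P) : ∃ d : Dipath E, d.verts = RhoV r S Q P p := by
  obtain ⟨g₁, n₁, n₂, hvertsQ, haft2Q, hn₁, hg₁S, hprefix, hsv, hg₁full⟩ :=
    qFacts hrS hvS hsep hQ hQo hP hp
  obtain ⟨f₁, m₁, m₂, hverts, haft2, hxZ, hm₂, hupto, htail, hmS, hmT⟩ :=
    pFacts hrS hvS hsep hQ hQo hP hp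
  have hrv : RhoV r S Q P p = (g₁ ++ n₁) ++ xst r S Q P p :: (m₂ ++ [v]) := by
    rw [RhoV, hprefix, htail]
  have hndQ := nodup_verts (qOf r S Q P p)
  rw [hvertsQ] at hndQ
  have hndP := nodup_verts p
  rw [hverts] at hndP
  have hch : List.Chain' (fun a b => (a, b) ∈ E) (RhoV r S Q P p) := by
    rw [hrv]
    refine List.isChain_split.mpr ⟨?_, ?_⟩
    · exact (List.isChain_split.mp (hvertsQ ▸ chain'_verts (qOf r S Q P p))).1
    · exact (List.isChain_split.mp (hverts ▸ chain'_verts p)).2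
  have hnd : (RhoV r S Q P p).Nodup := by
    rw [hrv]
    rw [List.nodup_append']
    refine ⟨(List.nodup_append'.mp hndQ).1, ?_, ?_⟩
    · have h2 := (List.nodup_append'.mp hndP).2.1
      exact h2
    · intro y hy1 hy2
      rcases List.mem_cons.mp hy2 with rfl | hy2
      · exact (List.nodup_append'.mp hndQ).2.2 hy1 (by simp)
      · rcases List.mem_append.mp hy2 with hy2 | hy2
        · -- y in m₂, y in g₁ ++ n₁
          rcases List.mem_append.mp hy1 with hy1 | hy1
          · exact before_tails_contra hrS hvS hsep hQ hQo hP
              (qOf_spec hrS hvS hsep hQ hQo hP hp).1 (hg₁full y hy1).1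
              (hg₁full y hy1).2.1 (hmT y hy2)
          · exact hn₁ y hy1 (hmT y hy2)
        · simp at hy2
          subst hy2
          exact (List.nodup_append'.mp hndQ).2.2 hy1 (by simp)
  exact ⟨ofVerts (RhoV r S Q P p) (by rw [hrv]; simp) hch hnd,
    verts_ofVerts _ _ _ _⟩

theorem rho_start_last (hrS : r ∉ S) (hvS : v ∉ S)
    (hsep : ∀ d : Dipath E, d.start = r → d.last = v → (d.support ∩ S).Nonempty)
    (hQ : IsRVSystem E r v Q) (hQo : Orthogonal Q S) (hP : IsRVSystem E r v P)
    {p : Dipath E} (hp : p ∈ P) {d : Dipath E} (hd : d.verts = RhoV r S Q P p) :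
    d.start = r ∧ d.last = v := by
  obtain ⟨g₁, n₁, n₂, hvertsQ, haft2Q, hn₁, hg₁S, hprefix, hsv, hg₁full⟩ :=
    qFacts hrS hvS hsep hQ hQo hP hp
  obtain ⟨f₁, m₁, m₂, hverts, haft2, hxZ, hm₂, hupto, htail, hmS, hmT⟩ :=
    pFacts hrS hvS hsep hQ hQo hP hp
  have hrv : RhoV r S Q P p = (g₁ ++ n₁) ++ xst r S Q P p :: (m₂ ++ [v]) := by
    rw [RhoV, hprefix, htail]
  constructor
  · have h1 : d.verts.head? = (qOf r S Q P p).verts.head? := by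
      rw [hd, hrv, hvertsQ]
      exact head?_append_cons _ _ _ _
    rw [verts_head?, verts_head?, (hQ.1 _ (qOf_spec hrS hvS hsep hQ hQo hP hp).1).1] at h1
    exact Option.some_injective _ h1
  · have h1 : d.verts.getLast? = some v := by
      rw [hd, hrv, show (g₁ ++ n₁) ++ xst r S Q P p :: (m₂ ++ [v]) =
        ((g₁ ++ n₁) ++ xst r S Q P p :: m₂) ++ [v] by simp]
      exact List.getLast?_concat
    rw [List.getLast?_eq_getLast (verts_ne_nil d), ← last_eq_getLast] at h1
    exact Option.some_injective _ h1

theorem rho_lastEdge (hrS : r ∉ S) (hvS : v ∉ S)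
    (hsep : ∀ d : Dipath E, d.start = r → d.last = v → (d.support ∩ S).Nonempty)
    (hQ : IsRVSystem E r v Q) (hQo : Orthogonal Q S) (hP : IsRVSystem E r v P)
    {p : Dipath E} (hp : p ∈ P) {d : Dipath E} (hd : d.verts = RhoV r S Q P p) :
    d.lastEdge? = p.lastEdge? := by
  obtain ⟨g₁, n₁, n₂, hvertsQ, haft2Q, hn₁, hg₁S, hprefix, hsv, hg₁full⟩ :=
    qFacts hrS hvS hsep hQ hQo hP hp
  obtain ⟨f₁, m₁, m₂, hverts, haft2, hxZ, hm₂, hupto, htail, hmS, hmT⟩ :=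
    pFacts hrS hvS hsep hQ hQo hP hp
  have hrv : RhoV r S Q P p = (g₁ ++ n₁) ++ xst r S Q P p :: (m₂ ++ [v]) := by
    rw [RhoV, hprefix, htail]
  obtain ⟨Y, a, hYa⟩ : ∃ Y a, xst r S Q P p :: m₂ = Y ++ [a] := by
    obtain ⟨z, hz⟩ : ∃ z, (xst r S Q P p :: m₂).getLast? = some z :=
      ⟨_, List.getLast?_eq_getLast (by simp)⟩
    obtain ⟨Y, hY⟩ := eq_concat_of_getLast? hz
    exact ⟨Y, z, hY⟩
  have e1 : p.lastEdge? = some (a, v) := by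
    refine lastEdge?_of_decomp p ((f₁ ++ m₁) ++ Y) a ?_
    rw [hverts, show xst r S Q P p :: (m₂ ++ [v]) = (xst r S Q P p :: m₂) ++ [v] by simp, hYa]
    simp
  have e2 : d.lastEdge? = some (a, v) := by
    refine lastEdge?_of_decomp d ((g₁ ++ n₁) ++ Y) a ?_
    rw [hd, hrv, show xst r S Q P p :: (m₂ ++ [v]) = (xst r S Q P p :: m₂) ++ [v] by simp, hYa]
    simp
  rw [e1, e2]

/-- The unique `S`-vertex on a rerouted path. -/
theorem rho_S_vertex (hrS : r ∉ S) (hvS : v ∉ S)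
    (hsep : ∀ d : Dipath E, d.start = r → d.last = v → (d.support ∩ S).Nonempty)
    (hQ : IsRVSystem E r v Q) (hQo : Orthogonal Q S) (hP : IsRVSystem E r v P)
    {p : Dipath E} (hp : p ∈ P) :
    sV r S (qOf r S Q P p) ∈ RhoV r S Q P p ∧
      ∀ y ∈ RhoV r S Q P p, y ∈ S → y = sV r S (qOf r S Q P p) := by
  obtain ⟨g₁, n₁, n₂, hvertsQ, haft2Q, hn₁, hg₁S, hprefix, hsv, hg₁full⟩ :=
    qFacts hrS hvS hsep hQ hQo hP hp
  obtain ⟨f₁, m₁, m₂, hverts, haft2, hxZ, hm₂, hupto, htail, hmS, hmT⟩ :=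
    pFacts hrS hvS hsep hQ hQo hP hp
  have hrv : RhoV r S Q P p = (g₁ ++ n₁) ++ xst r S Q P p :: (m₂ ++ [v]) := by
    rw [RhoV, hprefix, htail]
  have hqQ := (qOf_spec hrS hvS hsep hQ hQo hP hp).1
  have hmeetq := hsep _ (hQ.1 _ hqQ).1 (hQ.1 _ hqQ).2
  have hafq := aft_facts hrS hvS (hQ.1 _ hqQ).1 (hQ.1 _ hqQ).2 hmeetq
  constructor
  · rw [hrv]
    rcases hsv with h | h
    · simp [h]
    · rw [h]; simp
  · intro y hy hyS
    rcases rho_mem_cases hrS hvS hsep hQ hQo hP hp hy with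
      h | h | h | h | h
    · exact absurd hyS h.2.2
    · exact hafq.2.2.2 y h.1 hyS
    · subst h
      have hx : xst r S Q P p ∈ aft r S (qOf r S Q P p) := by rw [haft2Q]; simp
      exact hafq.2.2.2 _ hx hyS
    · exact absurd hyS h.2.2.2
    · subst h
      exact absurd hyS hvS

end Stmt3Aux
namespace Stmt3Aux

open Classical List

variable {V : Type u} {E : Set (V × V)} {r v : V} {S : Set V} {Q P : Set (Dipath E)}

set_option maxHeartbeats 1000000

theorem xst_mem_Zs (hrS : r ∉ S) (hvS : v ∉ S)
    (hsep : ∀ d : Dipath E, d.start = r → d.last = v → (d.support ∩ S).Nonempty)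
    (hQ : IsRVSystem E r v Q) (hQo : Orthogonal Q S) (hP : IsRVSystem E r v P)
    {p : Dipath E} (hp : p ∈ P) : xst r S Q P p ∈ Zs r S Q P := by
  obtain ⟨f₁, m₁, m₂, -, -, hxZ, -, -, -, -, -⟩ := pFacts hrS hvS hsep hQ hQo hP hp
  exact hxZ

theorem xst_mem_aft_qOf (hrS : r ∉ S) (hvS : v ∉ S)
    (hsep : ∀ d : Dipath E, d.start = r → d.last = v → (d.support ∩ S).Nonempty)
    (hQ : IsRVSystem E r v Q) (hQo : Orthogonal Q S) (hP : IsRVSystem E r v P)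
    {p : Dipath E} (hp : p ∈ P) : xst r S Q P p ∈ aft r S (qOf r S Q P p) :=
  mem_of_mem_upTo (qOf_spec hrS hvS hsep hQ hQo hP hp).2

/-- A rerouted path and a clean `Q`-path never share an internal vertex. -/
theorem rho_clean_contra (hrS : r ∉ S) (hvS : v ∉ S)
    (hsep : ∀ d : Dipath E, d.start = r → d.last = v → (d.support ∩ S).Nonempty)
    (hQ : IsRVSystem E r v Q) (hQo : Orthogonal Q S) (hP : IsRVSystem E r v P)
    {p : Dipath E} (hp : p ∈ P) {q' : Dipath E} (hq' : q' ∈ Q) (hc : cleanQ r S Q P q')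
    {y : V} (hy : y ∈ RhoV r S Q P p) (hy' : y ∈ q'.verts)
    (hyr : y ≠ r) (hyv : y ≠ v) : False := by
  have hqQ := (qOf_spec hrS hvS hsep hQ hQo hP hp).1
  have hmeetq := hsep _ (hQ.1 _ hqQ).1 (hQ.1 _ hqQ).2
  have hafq := aft_facts hrS hvS (hQ.1 _ hqQ).1 (hQ.1 _ hqQ).2 hmeetq
  have hqside : y ∈ (qOf r S Q P p).verts → False := by
    intro hyq
    have heq : qOf r S Q P p = q' := supp_unique hQ hqQ hq' hyq hy' hyr hyv
    apply hc (xst r S Q P p)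
    · rw [← heq]
      exact xst_mem_aft_qOf hrS hvS hsep hQ hQo hP hp
    · exact xst_tails hrS hvS hsep hQ hQo hP hp
  have hmside : y ∈ tails r S P (Zs r S Q P) → False := by
    intro hyt
    by_cases hyaf : y ∈ afterS r S q'
    · obtain ⟨g₁, g₂, hdec, hsS, hg₁, hg₂, haft, hafterS⟩ := q_decomp hvS hsep hQ hQo hq'
      have hyaft : y ∈ aft r S q' := by
        rw [hafterS] at hyaf
        rw [haft]
        rcases List.mem_cons.mp hyaf with h | h
        · simp [h]
        · rcases List.mem_append.mp h with h | h
          · simp [h]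
          · simp at h
            exact absurd h hyv
      exact hc y hyaft hyt
    · exact before_tails_contra hrS hvS hsep hQ hQo hP hq' hy' hyaf hyt
  rcases rho_mem_cases hrS hvS hsep hQ hQo hP hp hy with h | h | h | h | h
  · exact hqside h.1
  · exact hqside (hafq.1 _ h.1)
  · exact hqside (hafq.1 _ (h ▸ xst_mem_aft_qOf hrS hvS hsep hQ hQo hP hp))
  · exact hmside h.2.1
  · exact hyv h

/-- Main disjointness of the final system. -/
theorem Rset_disjoint (hrS : r ∉ S) (hvS : v ∉ S)
    (hsep : ∀ d : Dipath E, d.start = r → d.last = v → (d.support ∩ S).Nonempty)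
    (hQ : IsRVSystem E r v Q) (hQo : Orthogonal Q S) (hP : IsRVSystem E r v P)
    {d d' : Dipath E} (hd : d ∈ Rset r S Q P) (hd' : d' ∈ Rset r S Q P)
    {y : V} (hy : y ∈ d.verts) (hy' : y ∈ d'.verts) (hyr : y ≠ r) (hyv : y ≠ v) :
    d = d' := by
  have hpq : ∀ p : Dipath E, p ∈ P → ∀ z, z ∈ RhoV r S Q P p → z ≠ r → z ≠ v →
      z ∈ (qOf r S Q P p).verts ∨
      (z ∈ aft r S p ∧ z ∈ tails r S P (Zs r S Q P) ∧ z ∉ Zs r S Q P) := by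
    intro p hp z hz hzr hzv
    have hqQ := (qOf_spec hrS hvS hsep hQ hQo hP hp).1
    have hmeetq := hsep _ (hQ.1 _ hqQ).1 (hQ.1 _ hqQ).2
    have hafq := aft_facts hrS hvS (hQ.1 _ hqQ).1 (hQ.1 _ hqQ).2 hmeetq
    rcases rho_mem_cases hrS hvS hsep hQ hQo hP hp hz with h | h | h | h | h
    · exact Or.inl h.1
    · exact Or.inl (hafq.1 _ h.1)
    · exact Or.inl (hafq.1 _ (h ▸ xst_mem_aft_qOf hrS hvS hsep hQ hQo hP hp))
    · exact Or.inr ⟨h.1, h.2.1, h.2.2.1⟩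
    · exact absurd h hzv
  rcases hd with ⟨p, hp, hdv⟩ | ⟨hdQ, hdc⟩ <;> rcases hd' with ⟨p', hp', hdv'⟩ | ⟨hdQ', hdc'⟩
  · -- rho vs rho
    rw [hdv] at hy
    rw [hdv'] at hy'
    have hpeq : p = p' := by
      rcases hpq p hp y hy hyr hyv with h1 | h1 <;> rcases hpq p' hp' y hy' hyr hyv with h2 | h2
      · have hqeq : qOf r S Q P p = qOf r S Q P p' :=
          supp_unique hQ (qOf_spec hrS hvS hsep hQ hQo hP hp).1
            (qOf_spec hrS hvS hsep hQ hQo hP hp').1 h1 h2 hyr hyv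
        exact p_eq_of_xst_eq hrS hvS hsep hQ hQo hP hp hp'
          (xst_eq_of_qOf_eq hrS hvS hsep hQ hQo hP hp hp' hqeq)
      · -- y on q-side of p and tail-side of p'
        rcases rho_mem_cases hrS hvS hsep hQ hQo hP hp hy with h | h | h | h | h
        · exact (before_tails_contra hrS hvS hsep hQ hQo hP
            (qOf_spec hrS hvS hsep hQ hQo hP hp).1 h.1 h.2.1 h2.2.1).elim
        · exact absurd h2.2.1 h.2
        · exact absurd (h ▸ xst_mem_Zs hrS hvS hsep hQ hQo hP hp) h2.2.2
        · have hmeet := hsep p (hP.1 p hp).1 (hP.1 p hp).2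
          have haf := aft_facts hrS hvS (hP.1 p hp).1 (hP.1 p hp).2 hmeet
          have hmeet' := hsep p' (hP.1 p' hp').1 (hP.1 p' hp').2
          have haf' := aft_facts hrS hvS (hP.1 p' hp').1 (hP.1 p' hp').2 hmeet'
          exact supp_unique hP hp hp' (haf.1 _ h.1) (haf'.1 _ h2.1) hyr hyv
        · exact absurd h hyv
      · rcases rho_mem_cases hrS hvS hsep hQ hQo hP hp' hy' with h | h | h | h | h
        · exact (before_tails_contra hrS hvS hsep hQ hQo hP
            (qOf_spec hrS hvS hsep hQ hQo hP hp').1 h.1 h.2.1 h1.2.1).elim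
        · exact absurd h1.2.1 h.2
        · exact absurd (h ▸ xst_mem_Zs hrS hvS hsep hQ hQo hP hp') h1.2.2
        · have hmeet := hsep p (hP.1 p hp).1 (hP.1 p hp).2
          have haf := aft_facts hrS hvS (hP.1 p hp).1 (hP.1 p hp).2 hmeet
          have hmeet' := hsep p' (hP.1 p' hp').1 (hP.1 p' hp').2
          have haf' := aft_facts hrS hvS (hP.1 p' hp').1 (hP.1 p' hp').2 hmeet'
          exact supp_unique hP hp hp' (haf.1 _ h1.1) (haf'.1 _ h.1) hyr hyv
        · exact absurd h hyv
      · have hmeet := hsep p (hP.1 p hp).1 (hP.1 p hp).2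
        have haf := aft_facts hrS hvS (hP.1 p hp).1 (hP.1 p hp).2 hmeet
        have hmeet' := hsep p' (hP.1 p' hp').1 (hP.1 p' hp').2
        have haf' := aft_facts hrS hvS (hP.1 p' hp').1 (hP.1 p' hp').2 hmeet'
        exact supp_unique hP hp hp' (haf.1 _ h1.1) (haf'.1 _ h2.1) hyr hyv
    apply Dipath.ext_verts
    rw [hdv, hdv', hpeq]
  · exact absurd (rho_clean_contra hrS hvS hsep hQ hQo hP hp hdQ' hdc'
      (hdv ▸ hy) hy' hyr hyv) (by simp)
  · exact absurd (rho_clean_contra hrS hvS hsep hQ hQo hP hp' hdQ hdc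
      (hdv' ▸ hy') hy hyr hyv) (by simp)
  · exact supp_unique hQ hdQ hdQ' hy hy' hyr hyv

end Stmt3Aux
namespace Stmt3Aux

open Classical List

variable {V : Type u} {E : Set (V × V)} {r v : V} {S : Set V} {Q P : Set (Dipath E)}

set_option maxHeartbeats 1000000

theorem Rset_unique_S (hrS : r ∉ S) (hvS : v ∉ S)
    (hsep : ∀ d : Dipath E, d.start = r → d.last = v → (d.support ∩ S).Nonempty)
    (hQ : IsRVSystem E r v Q) (hQo : Orthogonal Q S) (hP : IsRVSystem E r v P)
    {d : Dipath E} (hd : d ∈ Rset r S Q P) : ∃! x, x ∈ d.support ∩ S := by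
  simp only [Rset, Set.mem_setOf_eq] at hd
  rcases hd with ⟨p, hp, hdv⟩ | ⟨hdQ, -⟩
  · have hqQ := (qOf_spec hrS hvS hsep hQ hQo hP hp).1
    obtain ⟨-, -, -, hsS, -, -, -, -⟩ := q_decomp hvS hsep hQ hQo hqQ
    have hrs := rho_S_vertex hrS hvS hsep hQ hQo hP hp
    refine ⟨sV r S (qOf r S Q P p), ⟨?_, hsS⟩, ?_⟩
    · rw [mem_support_iff, hdv]
      exact hrs.1
    · rintro y ⟨hy1, hy2⟩
      exact hrs.2 y (by rwa [mem_support_iff, hdv] at hy1) hy2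
  · exact hQo.1 d hdQ

theorem Rset_cover (hrS : r ∉ S) (hvS : v ∉ S)
    (hsep : ∀ d : Dipath E, d.start = r → d.last = v → (d.support ∩ S).Nonempty)
    (hQ : IsRVSystem E r v Q) (hQo : Orthogonal Q S) (hP : IsRVSystem E r v P)
    {x : V} (hx : x ∈ S) : ∃ d ∈ Rset r S Q P, x ∈ d.support := by
  obtain ⟨q, hq, hxq⟩ := hQo.2 x hx
  have hxv : x ∈ q.verts := hxq
  have hsv : x = sV r S q := sV_unique_Q hvS hQ hQo hq hxv hx
  by_cases hc : cleanQ r S Q P q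
  · exact ⟨q, Or.inr ⟨hq, hc⟩, hxq⟩
  · rw [cleanQ] at hc
    push_neg at hc
    obtain ⟨y, hy, hyt⟩ := hc
    rcases upTo_spec (tails r S P (Zs r S Q P)) (aft r S q) with
      ⟨heq, hfree⟩ | ⟨n₁, c, n₂, haft2, hcT, hn₁, hup⟩
    · exact absurd hyt (hfree y hy)
    · have hcZ : c ∈ Zs r S Q P := by
        rw [← Zs_fix r S Q P]
        simp only [PsiFun, Set.mem_iUnion, Set.mem_setOf_eq]
        exact ⟨q, hq, by rw [hup]; simp⟩
      obtain ⟨p', hp', hcaft, hco⟩ := tails_split hrS hvS hsep hQ hQo hP hcT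
      have hcx : c = xst r S Q P p' := by
        rcases hco with h | h
        · exact h
        · exact absurd hcZ h
      have hqQ' := (qOf_spec hrS hvS hsep hQ hQo hP hp').1
      have hx2 : xst r S Q P p' ∈ aft r S (qOf r S Q P p') :=
        xst_mem_aft_qOf hrS hvS hsep hQ hQo hP hp'
      have hx1 : xst r S Q P p' ∈ aft r S q := by
        rw [← hcx, haft2]
        simp
      have hmeetq := hsep q (hQ.1 q hq).1 (hQ.1 q hq).2
      have hafq := aft_facts hrS hvS (hQ.1 q hq).1 (hQ.1 q hq).2 hmeetq
      have hmeetq' := hsep _ (hQ.1 _ hqQ').1 (hQ.1 _ hqQ').2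
      have hafq' := aft_facts hrS hvS (hQ.1 _ hqQ').1 (hQ.1 _ hqQ').2 hmeetq'
      have hqe : q = qOf r S Q P p' :=
        supp_unique hQ hq hqQ' (hafq.1 _ hx1) (hafq'.1 _ hx2)
          (hafq.2.1 _ hx1) (hafq.2.2.1 _ hx1)
      obtain ⟨d, hdv⟩ := rho_path hrS hvS hsep hQ hQo hP hp'
      refine ⟨d, Or.inl ⟨p', hp', hdv⟩, ?_⟩
      rw [mem_support_iff, hdv]
      have hmem := (rho_S_vertex hrS hvS hsep hQ hQo hP hp').1
      rw [hsv, hqe]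
      exact hmem

end Stmt3Aux

/-- For any `I ∈ 𝒢_D(v)` and any Erdős–Menger `(r,v)`-separation `S` there is an
`(r,v)`-path-system orthogonal to `S` whose terminal edges include `I`. -/
theorem stmt3 {V : Type u} (E : Set (V × V)) (r v : V) (hv : v ≠ r)
    (hrv : (r, v) ∉ E) (I : Set (V × V)) (hI : I ∈ GSet E r v)
    (S : Set V) (hS : IsEMSeparation E r v S) :
    ∃ R : Set (Dipath E), IsRVSystem E r v R ∧ Orthogonal R S ∧ I ⊆ termEdges R := by
  classical
  obtain ⟨Pset, hPsys, hPterm⟩ := hI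
  obtain ⟨⟨hrS, hvS, hsepfun⟩, Qset, hQsys, hQorth⟩ := hS
  refine ⟨Stmt3Aux.Rset r S Qset Pset, ⟨?_, ?_⟩, ⟨?_, ?_⟩, ?_⟩
  · intro d hd
    simp only [Stmt3Aux.Rset, Set.mem_setOf_eq] at hd
    rcases hd with ⟨p, hp, hdv⟩ | ⟨hdQ, -⟩
    · exact Stmt3Aux.rho_start_last hrS hvS hsepfun hQsys hQorth hPsys hp hdv
    · exact hQsys.1 d hdQ
  · intro d hd d' hd' hne y hy
    by_contra hcon
    simp only [Set.mem_insert_iff, Set.mem_singleton_iff] at hcon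
    push_neg at hcon
    exact hne (Stmt3Aux.Rset_disjoint hrS hvS hsepfun hQsys hQorth hPsys hd hd'
      hy.1 hy.2 hcon.1 hcon.2)
  · intro d hd
    exact Stmt3Aux.Rset_unique_S hrS hvS hsepfun hQsys hQorth hPsys hd
  · intro x hx
    exact Stmt3Aux.Rset_cover hrS hvS hsepfun hQsys hQorth hPsys hx
  · intro e he
    rw [← hPterm] at he
    obtain ⟨p, hp, hle⟩ := he
    obtain ⟨d, hdv⟩ := Stmt3Aux.rho_path hrS hvS hsepfun hQsys hQorth hPsys hp
    exact ⟨d, Or.inl ⟨p, hp, hdv⟩,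
      by rw [Stmt3Aux.rho_lastEdge hrS hvS hsepfun hQsys hQorth hPsys hp hdv]; exact hle⟩
end
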